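/- arXiv:0802.2992 — 6 statements merged into one kernel-verified Lean document; each statement's English description precedes it below -/
import Mathlib

section
/- For every real number β > 1 and every nonnegative real x, the greedy algorithm produces a β-representation of x: there exist k ∈ ℤ and digits x_i ∈ {0,1,...,⌊β⌋} for i ≤ k with x_k ≥ 1 (when x ≥ 1) such that x = Σ_{i ≤ k} x_i β^i. -/
noncomputable def gRem (β x : ℝ) (k : ℤ) : ℕ → ℝ
  | 0 => Int.fract (x / β ^ k)
  | n + 1 => Int.fract (β * gRem β x k n)

noncomputable def gDig (β x : ℝ) (k : ℤ) : ℕ → ℕ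
  | 0 => ⌊x / β ^ k⌋.toNat
  | n + 1 => ⌊β * gRem β x k n⌋.toNat

lemma gRem_nonneg (β x : ℝ) (k : ℤ) (n : ℕ) : 0 ≤ gRem β x k n := by
  cases n <;> exact Int.fract_nonneg _

lemma gRem_lt_one (β x : ℝ) (k : ℤ) (n : ℕ) : gRem β x k n < 1 := by
  cases n <;> exact Int.fract_lt_one _

lemma gKey (β x : ℝ) (k : ℤ) (hβ : 1 < β) (h1 : 1 ≤ x / β ^ k) :
    ∀ n : ℕ, x = (∑ m ∈ Finset.range (n + 1), (gDig β x k m : ℝ) * β ^ (k - m))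
      + gRem β x k n * β ^ (k - (n : ℤ)) := by
  have hβ0 : (0 : ℝ) < β := lt_trans one_pos hβ
  have hβne : β ≠ 0 := ne_of_gt hβ0
  have hβk : (0 : ℝ) < β ^ k := zpow_pos hβ0 k
  intro n
  induction n with
  | zero =>
      have h0' : (0 : ℤ) ≤ ⌊x / β ^ k⌋ := Int.floor_nonneg.2 (by linarith)
      have hfl : ((gDig β x k 0 : ℕ) : ℝ) = (⌊x / β ^ k⌋ : ℝ) := by
        rw [show gDig β x k 0 = ⌊x / β ^ k⌋.toNat from rfl]
        exact_mod_cast Int.toNat_of_nonneg h0'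
      have h := Int.floor_add_fract (x / β ^ k)
      simp only [zero_add, Finset.range_one, Finset.sum_singleton, Nat.cast_zero, sub_zero, hfl]
      rw [show gRem β x k 0 = Int.fract (x / β ^ k) from rfl]
      have hx' : x = (x / β ^ k) * β ^ k := (div_mul_cancel₀ x (ne_of_gt hβk)).symm
      rw [← h, add_mul] at hx'
      linarith
  | succ n ih =>
      have hrn : 0 ≤ β * gRem β x k n := mul_nonneg hβ0.le (gRem_nonneg β x k n)
      have hfl : ((gDig β x k (n + 1) : ℕ) : ℝ) = (⌊β * gRem β x k n⌋ : ℝ) := by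
        rw [show gDig β x k (n + 1) = ⌊β * gRem β x k n⌋.toNat from rfl]
        exact_mod_cast Int.toNat_of_nonneg (Int.floor_nonneg.2 hrn)
      have h := Int.floor_add_fract (β * gRem β x k n)
      have hstep : gRem β x k n * β ^ (k - (n : ℤ))
          = (gDig β x k (n + 1) : ℝ) * β ^ (k - ((n : ℤ) + 1))
            + gRem β x k (n + 1) * β ^ (k - ((n : ℤ) + 1)) := by
        rw [hfl]
        rw [show gRem β x k (n + 1) = Int.fract (β * gRem β x k n) from rfl]
        rw [← add_mul, h]
        rw [show k - ((n : ℤ) + 1) = (k - (n : ℤ)) - 1 by ring, zpow_sub_one₀ hβne]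
        field_simp
      rw [Finset.sum_range_succ]
      push_cast
      push_cast at ih hstep
      linarith

/-- For every real β > 1 and every nonnegative real x, the greedy
algorithm produces a β-representation of x: there exist k ∈ ℤ and digits
x_i ∈ {0,…,⌊β⌋} for i ≤ k, vanishing for i > k, with x_k ≥ 1 when x ≥ 1, such
that x = Σ_{i ≤ k} x_i β^i. -/
theorem greedy_beta_representation_exists (β : ℝ) (hβ : 1 < β) (x : ℝ) (hx : 0 ≤ x) :
    ∃ (k : ℤ) (d : ℤ → ℕ),
      (∀ i : ℤ, i ≤ k → (d i : ℤ) ≤ ⌊β⌋) ∧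
      (∀ i : ℤ, k < i → d i = 0) ∧
      (1 ≤ x → 1 ≤ d k) ∧
      x = ∑' i : ℤ, (d i : ℝ) * β ^ i := by
  have hβ0 : (0 : ℝ) < β := lt_trans one_pos hβ
  rcases eq_or_lt_of_le hx with h0 | hpos
  · exact ⟨0, fun _ => 0, fun i _ => by simpa using Int.floor_nonneg.2 hβ0.le,
      fun _ _ => rfl, fun h => absurd h (by simp [← h0]), by simp [← h0]⟩
  · set k : ℤ := ⌊Real.logb β x⌋ with hk
    have hrl : β ^ Real.logb β x = x := Real.rpow_logb hβ0 (ne_of_gt hβ) hpos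
    have hk1 : β ^ k ≤ x := by
      calc β ^ k = β ^ ((k : ℝ)) := (Real.rpow_intCast β k).symm
        _ ≤ β ^ Real.logb β x :=
            Real.rpow_le_rpow_of_exponent_le hβ.le (Int.floor_le _)
        _ = x := hrl
    have hk2 : x < β ^ (k + 1) := by
      calc x = β ^ Real.logb β x := hrl.symm
        _ < β ^ ((k + 1 : ℤ) : ℝ) := by
            apply Real.rpow_lt_rpow_of_exponent_lt hβ
            push_cast
            exact Int.lt_floor_add_one _
        _ = β ^ (k + 1) := Real.rpow_intCast β (k + 1)
    have hβk : (0 : ℝ) < β ^ k := zpow_pos hβ0 k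
    have h1 : 1 ≤ x / β ^ k := (one_le_div hβk).2 hk1
    have hlt : x / β ^ k < β := by
      rw [div_lt_iff₀ hβk]
      calc x < β ^ (k + 1) := hk2
        _ = β * β ^ k := by rw [zpow_add_one₀ (ne_of_gt hβ0)]; ring
    set d : ℤ → ℕ := fun i => if i ≤ k then gDig β x k (k - i).toNat else 0 with hd
    have hdig_le : ∀ n : ℕ, (gDig β x k n : ℤ) ≤ ⌊β⌋ := by
      intro n
      cases n with
      | zero =>
          have h0' : (0 : ℤ) ≤ ⌊x / β ^ k⌋ := Int.floor_nonneg.2 (by linarith)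
          rw [show gDig β x k 0 = ⌊x / β ^ k⌋.toNat from rfl, Int.toNat_of_nonneg h0']
          exact Int.floor_le_floor hlt.le
      | succ n =>
          have hle : β * gRem β x k n ≤ β :=
            mul_le_of_le_one_right hβ0.le (gRem_lt_one β x k n).le
          have hnn : 0 ≤ β * gRem β x k n := mul_nonneg hβ0.le (gRem_nonneg β x k n)
          rw [show gDig β x k (n + 1) = ⌊β * gRem β x k n⌋.toNat from rfl,
            Int.toNat_of_nonneg (Int.floor_nonneg.2 hnn)]
          exact Int.floor_le_floor hle
    refine ⟨k, d, ?_, ?_, ?_, ?_⟩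
    · intro i hi
      simp only [hd, if_pos hi]
      exact hdig_le _
    · intro i hi
      simp [hd, not_le.2 hi]
    · intro _
      have h1' : (1 : ℤ) ≤ ⌊x / β ^ k⌋ := Int.le_floor.2 (by exact_mod_cast h1)
      simp only [hd, if_pos le_rfl, sub_self, Int.toNat_zero]
      rw [show gDig β x k 0 = ⌊x / β ^ k⌋.toNat from rfl]
      omega
    · have hhs : HasSum (fun i : ℤ => (d i : ℝ) * β ^ i) x := by
        have hginj : Function.Injective (fun m : ℕ => k - (m : ℤ)) := by
          intro a b hab
          simp only at hab
          omega
        rw [← Function.Injective.hasSum_iff hginj (by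
          intro i hi
          have : k < i := by
            by_contra hcon
            exact hi ⟨(k - i).toNat, by push_cast; omega⟩
          simp [hd, not_le.2 this])]
        have hcomp : ∀ m : ℕ, ((fun i : ℤ => (d i : ℝ) * β ^ i) ∘ fun m : ℕ => k - (m : ℤ)) m
            = (gDig β x k m : ℝ) * β ^ (k - (m : ℤ)) := by
          intro m
          simp only [Function.comp, hd, if_pos (by omega : k - (m : ℤ) ≤ k)]
          rw [show (k - (k - (m : ℤ))).toNat = m from by omega]
        rw [show ((fun i : ℤ => (d i : ℝ) * β ^ i) ∘ fun m : ℕ => k - (m : ℤ))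
            = fun m : ℕ => (gDig β x k m : ℝ) * β ^ (k - (m : ℤ)) from funext hcomp]
        rw [hasSum_iff_tendsto_nat_of_nonneg
          (fun m => mul_nonneg (Nat.cast_nonneg _) (zpow_pos hβ0 _).le)]
        rw [← Filter.tendsto_add_atTop_iff_nat 1]
        have hkey := gKey β x k hβ h1
        have heq : (fun n : ℕ => ∑ i ∈ Finset.range (n + 1),
            (gDig β x k i : ℝ) * β ^ (k - (i : ℤ)))
            = fun n : ℕ => x - gRem β x k n * β ^ (k - (n : ℤ)) := by
          funext n
          have := hkey n
          linarith
        rw [heq]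
        have htend : Filter.Tendsto (fun n : ℕ => gRem β x k n * β ^ (k - (n : ℤ)))
            Filter.atTop (nhds 0) := by
          have hb : Filter.Tendsto (fun n : ℕ => β ^ k * (β⁻¹) ^ n) Filter.atTop (nhds 0) := by
            have := (tendsto_pow_atTop_nhds_zero_of_lt_one
              (inv_nonneg.2 hβ0.le) (inv_lt_one_of_one_lt₀ hβ)).const_mul (β ^ k)
            simpa using this
          apply squeeze_zero
            (fun n => mul_nonneg (gRem_nonneg β x k n) (zpow_pos hβ0 _).le) _ hb
          intro n
          have hz : β ^ (k - (n : ℤ)) = β ^ k * (β⁻¹) ^ n := by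
            rw [zpow_sub₀ (ne_of_gt hβ0), inv_pow, ← zpow_natCast β n]
            ring
          rw [hz]
          exact mul_le_of_le_one_left
            (mul_nonneg hβk.le (pow_nonneg (inv_nonneg.2 hβ0.le) n))
            (gRem_lt_one β x k n).le
        have := Filter.Tendsto.sub (tendsto_const_nhds (x := x)) htend
        simpa using this
      exact hhs.tsum_eq.symm
end

section
/- (Parry condition) Let β > 1 and let d*_β(1) be the infinite Rényi expansion of unity. A β-representation Σ_{i ≤ k} x_i β^i of a nonnegative real x is the β-expansion of x if and only if for every i ≤ k the infinite word x_i x_{i-1} ⋯ is lexicographically smaller than d*_β(1). -/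
/-- The map `T_β(x) = {βx}` (fractional part of `βx`). -/
noncomputable def Tbeta (β x : ℝ) : ℝ := Int.fract (β * x)

/-- The Rényi expansion of unity in base β: `t_{i+1} = ⌊β T_β^i(1)⌋`
(0-indexed, so `renyiDigit β i` is the digit `t_{i+1}` of the paper). -/
noncomputable def renyiDigit (β : ℝ) (i : ℕ) : ℤ := ⌊β * (Tbeta β)^[i] 1⌋

open Classical in
/-- The infinite Rényi expansion of unity `d*_β(1)` (0-indexed): if
`d_β(1) = t_1 ⋯ t_m` is finite (with `t_m ≠ 0`, i.e. `T_β^m(1) = 0` with `m`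
minimal), then `d*_β(1) = (t_1 ⋯ t_{m-1} (t_m - 1))^ω`; otherwise
`d*_β(1) = d_β(1)`. -/
noncomputable def dstar (β : ℝ) : ℕ → ℤ :=
  if ∃ m : ℕ, 0 < m ∧ (Tbeta β)^[m] 1 = 0 then
    let m := sInf {m : ℕ | 0 < m ∧ (Tbeta β)^[m] 1 = 0}
    fun i => if i % m = m - 1 then renyiDigit β (m - 1) - 1 else renyiDigit β (i % m)
  else fun i => renyiDigit β i

/-- Strict lexicographic order on (right-)infinite words. -/
def LexLt (w v : ℕ → ℤ) : Prop :=
  ∃ n : ℕ, (∀ j : ℕ, j < n → w j = v j) ∧ w n < v n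

/-- `d` is the greedy β-expansion of `x`: a representation whose digits vanish
above some index and which satisfies the greedy condition that every tail
`Σ_{j < i} d_j β^j` is `< β^i`. -/
def IsBetaExpansion (β x : ℝ) (d : ℤ → ℕ) : Prop :=
  (∃ K : ℤ, ∀ i : ℤ, K < i → d i = 0) ∧
  x = (∑' i : ℤ, (d i : ℝ) * β ^ i) ∧
  ∀ i : ℤ, (∑' j : {j : ℤ // j < i}, (d j : ℝ) * β ^ (j : ℤ)) < β ^ i


open Classical in
noncomputable def Wfun (β : ℝ) : ℕ → ℝ :=
  if ∃ m : ℕ, 0 < m ∧ (Tbeta β)^[m] 1 = 0 then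
    let m := sInf {m : ℕ | 0 < m ∧ (Tbeta β)^[m] 1 = 0}
    fun n => (Tbeta β)^[n % m] 1
  else fun n => (Tbeta β)^[n] 1

lemma Tbeta_nonneg (β x : ℝ) : 0 ≤ Tbeta β x := Int.fract_nonneg _
lemma Tbeta_lt_one (β x : ℝ) : Tbeta β x < 1 := Int.fract_lt_one _

lemma Titer_nonneg (β : ℝ) (n : ℕ) : 0 ≤ (Tbeta β)^[n] 1 := by
  cases n with
  | zero => norm_num
  | succ n => rw [Function.iterate_succ_apply']; exact Tbeta_nonneg _ _

lemma Titer_le_one (β : ℝ) (n : ℕ) : (Tbeta β)^[n] 1 ≤ 1 := by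
  cases n with
  | zero => norm_num
  | succ n => rw [Function.iterate_succ_apply']; exact (Tbeta_lt_one _ _).le

/-- core identity -/
lemma Titer_step (β : ℝ) (n : ℕ) :
    β * (Tbeta β)^[n] 1 = (renyiDigit β n : ℝ) + (Tbeta β)^[n+1] 1 := by
  rw [Function.iterate_succ_apply']
  show β * (Tbeta β)^[n] 1 = (⌊β * (Tbeta β)^[n] 1⌋ : ℝ) + Int.fract (β * (Tbeta β)^[n] 1)
  rw [Int.floor_add_fract]

lemma Wfun_zero (β : ℝ) : Wfun β 0 = 1 := by
  unfold Wfun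
  split
  · simp
  · simp

lemma Wfun_pos (β : ℝ) : ∀ n, 0 < Wfun β n := by
  intro n
  unfold Wfun
  split
  case isTrue h =>
    set m := sInf {m : ℕ | 0 < m ∧ (Tbeta β)^[m] 1 = 0} with hm
    show 0 < (Tbeta β)^[n % m] 1
    have hmmem : 0 < m ∧ (Tbeta β)^[m] 1 = 0 := Nat.sInf_mem h
    have hlt : n % m < m := Nat.mod_lt _ hmmem.1
    rcases Nat.eq_zero_or_pos (n % m) with h0 | h0
    · rw [h0]; norm_num
    · rcases lt_or_eq_of_le (Titer_nonneg β (n % m)) with h1 | h1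
      · exact h1
      · exfalso
        have hmem2 : n % m ∈ {m : ℕ | 0 < m ∧ (Tbeta β)^[m] 1 = 0} := ⟨h0, h1.symm⟩
        exact Nat.notMem_of_lt_sInf hlt hmem2
  case isFalse h =>
    show 0 < (Tbeta β)^[n] 1
    rcases Nat.eq_zero_or_pos n with h0 | h0
    · rw [h0]; norm_num
    · rcases lt_or_eq_of_le (Titer_nonneg β n) with h1 | h1
      · exact h1
      · exact absurd ⟨n, h0, h1.symm⟩ h

lemma Wfun_le_one (β : ℝ) (n : ℕ) : Wfun β n ≤ 1 := by
  unfold Wfun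
  split
  · exact Titer_le_one β _
  · exact Titer_le_one β _

lemma Wfun_rec (β : ℝ) (n : ℕ) :
    β * Wfun β n = (dstar β n : ℝ) + Wfun β (n + 1) := by
  unfold Wfun dstar
  split
  case isTrue h =>
    set m := sInf {m : ℕ | 0 < m ∧ (Tbeta β)^[m] 1 = 0} with hmdef
    have hmmem : 0 < m ∧ (Tbeta β)^[m] 1 = 0 := Nat.sInf_mem h
    show β * (Tbeta β)^[n % m] 1 =
      ((if n % m = m - 1 then renyiDigit β (m - 1) - 1 else renyiDigit β (n % m) : ℤ) : ℝ)
        + (Tbeta β)^[(n+1) % m] 1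
    have hlt : n % m < m := Nat.mod_lt _ hmmem.1
    by_cases hr : n % m = m - 1
    · have h1 : (n + 1) % m = 0 := by
        have h2 : (n + 1) % m = (n % m + 1 % m) % m := Nat.add_mod n 1 m
        rcases Nat.lt_or_ge 1 m with hm1 | hm1
        · rw [h2, Nat.mod_eq_of_lt hm1, hr, (by omega : m - 1 + 1 = m), Nat.mod_self]
        · have hm1' : m = 1 := by omega
          rw [hm1'] at h2 ⊢
          simp [Nat.mod_one] at h2 ⊢
      rw [hr, h1, if_pos rfl]
      have h3 : β * (Tbeta β)^[m-1] 1 = (renyiDigit β (m-1) : ℝ) + (Tbeta β)^[m] 1 := by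
        have h4 := Titer_step β (m-1)
        rwa [(by omega : m - 1 + 1 = m)] at h4
      rw [h3, hmmem.2]
      push_cast
      simp
    · have hlt2 : n % m + 1 < m := by omega
      have h1 : (n + 1) % m = n % m + 1 := by
        rw [Nat.add_mod n 1 m, Nat.mod_eq_of_lt (by omega : 1 < m), Nat.mod_eq_of_lt hlt2]
      rw [h1, if_neg hr]
      exact Titer_step β (n % m)
  case isFalse h =>
    exact Titer_step β n

lemma dstar_nonneg (β : ℝ) (hβ : 1 < β) (n : ℕ) : 0 ≤ dstar β n := by
  have h1 := Wfun_rec β n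
  have h2 : (dstar β n : ℝ) = β * Wfun β n - Wfun β (n+1) := by linarith
  have h3 : (-1 : ℝ) < (dstar β n : ℝ) := by
    have := Wfun_pos β n
    have := Wfun_le_one β (n+1)
    nlinarith
  have h4 : (-1 : ℤ) < dstar β n := by exact_mod_cast h3
  omega

lemma dstar_lt_beta (β : ℝ) (hβ : 1 < β) (n : ℕ) : (dstar β n : ℝ) < β := by
  have h1 := Wfun_rec β n
  have := Wfun_pos β (n+1)
  have := Wfun_le_one β n
  nlinarith [Wfun_pos β n]

lemma dstar_partial (β : ℝ) (hβ : 1 < β) (n N : ℕ) :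
    ∑ m ∈ Finset.range N, (dstar β (n + m) : ℝ) * β ^ (-(m:ℤ) - 1)
      = Wfun β n - β ^ (-(N:ℤ)) * Wfun β (n + N) := by
  have hne : β ≠ 0 := by linarith
  induction N with
  | zero => simp
  | succ N ih =>
    rw [Finset.sum_range_succ, ih]
    have hrec := Wfun_rec β (n + N)
    have e1' : β ^ (-(N:ℤ)) = β ^ (-(N:ℤ) - 1) * β := by
      have h5 := zpow_add_one₀ hne (-(N:ℤ) - 1)
      norm_num at h5
      rw [zpow_neg, zpow_natCast]
      exact h5
    have e2 : (-(((N:ℕ)+1 : ℕ) : ℤ)) = -(N:ℤ) - 1 := by push_cast; ring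
    rw [e2]
    have e3 : (n + (N + 1) : ℕ) = (n + N) + 1 := by omega
    rw [e3]
    linear_combination (-(β ^ (-(N:ℤ) - 1))) * hrec + (-(Wfun β (n + N))) * e1'

lemma zpow_neg_nat (β : ℝ) (hβ : 1 < β) (N : ℕ) : β ^ (-(N:ℤ)) = (β⁻¹) ^ N := by
  rw [zpow_neg, zpow_natCast, inv_pow]

lemma dstar_term_nonneg (β : ℝ) (hβ : 1 < β) (n m : ℕ) :
    0 ≤ (dstar β (n + m) : ℝ) * β ^ (-(m:ℤ) - 1) := by
  apply mul_nonneg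
  · exact_mod_cast dstar_nonneg β hβ _
  · exact le_of_lt (zpow_pos (by linarith) _)

lemma dstar_summable (β : ℝ) (hβ : 1 < β) (n : ℕ) :
    Summable (fun m : ℕ => (dstar β (n + m) : ℝ) * β ^ (-(m:ℤ) - 1)) := by
  apply summable_of_sum_range_le (c := 1) (dstar_term_nonneg β hβ n)
  intro N
  rw [dstar_partial β hβ]
  have h1 := Wfun_le_one β n
  have h2 := Wfun_pos β (n+N)
  have h3 : (0:ℝ) < β ^ (-(N:ℤ)) := zpow_pos (by linarith) _
  nlinarith

lemma dstar_tsum (β : ℝ) (hβ : 1 < β) (n : ℕ) :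
    ∑' m : ℕ, (dstar β (n + m) : ℝ) * β ^ (-(m:ℤ) - 1) = Wfun β n := by
  have hs := dstar_summable β hβ n
  have h1 := hs.hasSum.tendsto_sum_nat
  have h0 : Filter.Tendsto (fun N : ℕ => β ^ (-(N:ℤ)) * Wfun β (n + N))
      Filter.atTop (nhds 0) := by
    apply squeeze_zero (fun N => le_of_lt (mul_pos (zpow_pos (by linarith) _) (Wfun_pos β _)))
      (g := fun N => (β⁻¹) ^ N)
    · intro N
      rw [zpow_neg_nat β hβ]
      have h4 : (0:ℝ) < (β⁻¹)^N := pow_pos (by positivity) _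
      nlinarith [Wfun_le_one β (n+N), Wfun_pos β (n+N)]
    · exact tendsto_pow_atTop_nhds_zero_of_lt_one (by positivity) (inv_lt_one_of_one_lt₀ hβ)
  have h2 : Filter.Tendsto (fun N : ℕ => ∑ m ∈ Finset.range N,
      (dstar β (n + m) : ℝ) * β ^ (-(m:ℤ)-1)) Filter.atTop (nhds (Wfun β n)) := by
    simp only [dstar_partial β hβ]
    simpa using tendsto_const_nhds.sub h0
  exact tendsto_nhds_unique h1 h2

lemma lex_trichotomy (a b : ℕ → ℤ) :
    LexLt a b ∨ (∀ n, a n = b n) ∨ ∃ n, (∀ j, j < n → a j = b j) ∧ b n < a n := by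
  by_cases h : ∀ n, a n = b n
  · exact Or.inr (Or.inl h)
  · push_neg at h
    have hne : a (Nat.find h) ≠ b (Nat.find h) := Nat.find_spec h
    have hmin : ∀ j, j < Nat.find h → a j = b j := fun j hj => not_not.mp (Nat.find_min h hj)
    rcases lt_or_gt_of_ne hne with hlt | hgt
    · exact Or.inl ⟨Nat.find h, hmin, hlt⟩
    · exact Or.inr (Or.inr ⟨Nat.find h, hmin, hgt⟩)

/-- Parry condition: a β-representation `Σ_{i ≤ k} d_i β^i` of a
nonnegative real `x` is the β-expansion of `x` iff for every `i ≤ k` the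
infinite word `d_i d_{i-1} ⋯` is lexicographically smaller than `d*_β(1)`. -/
theorem parry_condition (β : ℝ) (hβ : 1 < β) (x : ℝ) (hx : 0 ≤ x)
    (d : ℤ → ℕ) (k : ℤ) (hk : ∀ i : ℤ, k < i → d i = 0)
    (hsum : Summable (fun i : ℤ => (d i : ℝ) * β ^ i))
    (hrep : x = ∑' i : ℤ, (d i : ℝ) * β ^ i) :
    IsBetaExpansion β x d ↔
      ∀ i : ℤ, i ≤ k → LexLt (fun n : ℕ => (d (i - n) : ℤ)) (dstar β) := by
  have hβ0 : (0:ℝ) < β := by linarith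
  have hne0 : β ≠ 0 := ne_of_gt hβ0
  set A : ℤ → ℝ := fun i => ∑' n : ℕ, (d (i - n) : ℝ) * β ^ (-(n:ℤ) - 1) with hA
  -- summability of each tail word
  have hS : ∀ i : ℤ, Summable (fun n : ℕ => (d (i - n) : ℝ) * β ^ (-(n:ℤ) - 1)) := by
    intro i
    have hinj : Function.Injective (fun n : ℕ => i - (n:ℤ)) := by
      intro a b hab; simp only at hab; omega
    have h2 : Summable ((fun j : ℤ => (d j : ℝ) * β ^ j) ∘ (fun n : ℕ => i - (n:ℤ))) :=
      hsum.comp_injective hinj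
    have h3 := h2.mul_left (β ^ (-i - 1))
    apply h3.congr
    intro n
    show β ^ (-i - 1) * ((d (i - n) : ℝ) * β ^ ((i : ℤ) - n)) = _
    rw [show (-(n:ℤ) - 1) = (-i - 1) + (i - n) by ring, zpow_add₀ hne0]
    ring
  have hA0 : ∀ i : ℤ, 0 ≤ A i := fun i =>
    tsum_nonneg (fun n => mul_nonneg (Nat.cast_nonneg _) (zpow_pos hβ0 _).le)
  -- splitting of A
  have hsplit : ∀ (i : ℤ) (N : ℕ),
      A i = (∑ m ∈ Finset.range N, (d (i - m):ℝ) * β ^ (-(m:ℤ)-1))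
        + β ^ (-(N:ℤ)) * A (i - N) := by
    intro i N
    have h1 := Summable.sum_add_tsum_nat_add (f := fun n : ℕ => (d (i - n):ℝ) * β ^ (-(n:ℤ)-1)) N (hS i)
    have h2 : ∀ n : ℕ, (d (i - ((n + N : ℕ):ℤ)):ℝ) * β ^ (-((n+N : ℕ):ℤ)-1)
        = β ^ (-(N:ℤ)) * ((d ((i - N) - n):ℝ) * β ^ (-(n:ℤ)-1)) := by
      intro n
      rw [show (i - ((n + N : ℕ) : ℤ)) = (i - N) - n by push_cast; ring,
        show (-(((n+N:ℕ)):ℤ) - 1) = (-(N:ℤ)) + (-(n:ℤ) - 1) by push_cast; ring,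
        zpow_add₀ hne0]
      ring
    have h3 : (∑' n : ℕ, (d (i - ((n + N:ℕ):ℤ)):ℝ) * β ^ (-((n+N:ℕ):ℤ)-1))
        = β ^ (-(N:ℤ)) * A (i - N) := by
      rw [tsum_congr h2, tsum_mul_left]
    have h4 : A i = ∑' n : ℕ, (d (i - (n:ℤ)):ℝ) * β ^ (-(n:ℤ)-1) := rfl
    rw [h4, ← h1]
    try rw [h3]
    try (congr 1; exact h3)
  -- link with the subtype sums
  have hsub : ∀ i : ℤ, (∑' j : {j : ℤ // j < i}, (d j : ℝ) * β ^ (j:ℤ)) = β ^ i * A (i - 1) := by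
    intro i
    let e : ℕ ≃ {j : ℤ // j < i} :=
      { toFun := fun n => ⟨i - 1 - n, by omega⟩
        invFun := fun j => (i - 1 - j.1).toNat
        left_inv := by intro n; simp only; omega
        right_inv := by intro j; apply Subtype.ext; simp only; have := j.2; omega }
    rw [← Equiv.tsum_eq e (fun j : {j : ℤ // j < i} => (d j.1 : ℝ) * β ^ (j.1:ℤ))]
    have h2 : ∀ n : ℕ, (d (i-1-(n:ℤ)) : ℝ) * β ^ ((i-1-(n:ℤ))) 
        = β ^ i * ((d ((i-1) - n):ℝ) * β ^ (-(n:ℤ)-1)) := by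
      intro n
      rw [show (i-1-(n:ℤ)) = i + (-(n:ℤ) - 1) by ring, zpow_add₀ hne0]
      ring
    have h5 : (∑' (n : ℕ), (d ((e n) : ℤ) : ℝ) * β ^ (((e n) : ℤ)))
        = ∑' (n : ℕ), β ^ i * ((d ((i-1) - n):ℝ) * β ^ (-(n:ℤ)-1)) :=
      tsum_congr (fun n => by
        show (d (i-1-(n:ℤ)) : ℝ) * β ^ ((i-1-(n:ℤ))) = _
        exact h2 n)
    rw [h5, tsum_mul_left]
  -- greedy condition is equivalent to A i < 1 for all i
  have hgreedy_iff : (∀ i : ℤ, (∑' j : {j : ℤ // j < i}, (d j : ℝ) * β ^ (j:ℤ)) < β ^ i)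
      ↔ (∀ i : ℤ, A i < 1) := by
    constructor
    · intro h i
      have h1 := h (i + 1)
      rw [hsub] at h1
      simp only [add_sub_cancel_right] at h1
      have h2 : (0:ℝ) < β ^ (i+1) := zpow_pos hβ0 _
      nlinarith
    · intro h i
      rw [hsub]
      have h1 := h (i - 1)
      have h2 : (0:ℝ) < β ^ i := zpow_pos hβ0 _
      nlinarith
  -- A i < 1 above k provided A k < 1
  have htail : A k < 1 → ∀ i : ℤ, k < i → A i < 1 := by
    intro hAk i hi
    have hik : i - ((i - k).toNat : ℤ) = k := by omega
    have h1 := hsplit i (i - k).toNat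
    have h2 : ∀ m ∈ Finset.range (i - k).toNat, (d (i - m):ℝ) * β ^ (-(m:ℤ)-1) = 0 := by
      intro m hm
      simp only [Finset.mem_range] at hm
      have : k < i - m := by omega
      rw [hk _ this]; simp
    rw [Finset.sum_congr rfl h2, Finset.sum_const_zero, zero_add, hik] at h1
    have h3 : β ^ (-((i - k).toNat:ℤ)) ≤ 1 := by
      rw [zpow_neg_nat β hβ]
      exact pow_le_one₀ (by positivity) (by
        rw [inv_le_one_iff₀]; right; linarith)
    have h4 : (0:ℝ) < β ^ (-((i - k).toNat:ℤ)) := zpow_pos hβ0 _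
    nlinarith [hA0 k]
  constructor
  · rintro ⟨-, -, hgreedy⟩ i hik
    have hAlt : ∀ i : ℤ, A i < 1 := hgreedy_iff.mp hgreedy
    rcases lex_trichotomy (fun n : ℕ => (d (i - n) : ℤ)) (dstar β) with hL | heq | hgt
    · exact hL
    · exfalso
      have h1 : A i = 1 := by
        show (∑' n : ℕ, (d (i - (n:ℤ)) : ℝ) * β ^ (-(n:ℤ)-1)) = 1
        have h2 : ∀ n : ℕ, (d (i - (n:ℤ)) : ℝ) * β ^ (-(n:ℤ)-1)
            = (dstar β (0 + n) : ℝ) * β ^ (-(n:ℤ)-1) := by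
          intro n
          have h3 : (d (i - (n:ℤ)) : ℤ) = dstar β n := heq n
          have h4 : ((d (i - (n:ℤ)) : ℤ) : ℝ) = ((dstar β n : ℤ) : ℝ) := by rw [h3]
          rw [Nat.zero_add]
          push_cast at h4 ⊢
          rw [h4]
        rw [tsum_congr h2, dstar_tsum β hβ 0, Wfun_zero]
      linarith [hAlt i]
    · exfalso
      obtain ⟨n, hagree, hgtn⟩ := hgt
      have h1 := hsplit i (n+1)
      have hterms : ∀ m ∈ Finset.range n, (d (i - m):ℝ) * β^(-(m:ℤ)-1)
          = (dstar β (0+m):ℝ) * β^(-(m:ℤ)-1) := by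
        intro m hm
        simp only [Finset.mem_range] at hm
        have h3 : (d (i - (m:ℤ)) : ℤ) = dstar β m := hagree m hm
        have h4 : ((d (i - (m:ℤ)) : ℤ) : ℝ) = ((dstar β m : ℤ) : ℝ) := by rw [h3]
        rw [Nat.zero_add]
        push_cast at h4 ⊢
        rw [h4]
      have hlast : (dstar β (0+n) : ℝ) + 1 ≤ (d (i - n) : ℝ) := by
        have hgtn' : dstar β n < (d (i - (n:ℤ)) : ℤ) := hgtn
        have h5 : dstar β (0+n) + 1 ≤ (d (i - (n:ℤ)) : ℤ) := by rw [Nat.zero_add]; omega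
        exact_mod_cast h5
      have hpos : (0:ℝ) < β ^ (-(n:ℤ)-1) := zpow_pos hβ0 _
      have hdp := dstar_partial β hβ 0 (n+1)
      have hsum_ge : (∑ m ∈ Finset.range (n+1), (d (i - m):ℝ) * β ^ (-(m:ℤ)-1))
          ≥ (∑ m ∈ Finset.range (n+1), (dstar β (0+m):ℝ) * β ^ (-(m:ℤ)-1)) + β ^ (-(n:ℤ)-1) := by
        rw [Finset.sum_range_succ, Finset.sum_range_succ, Finset.sum_congr rfl hterms]
        nlinarith
      have hcast : β ^ (-((n+1:ℕ):ℤ)) = β ^ (-(n:ℤ)-1) := by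
        congr 1; push_cast; ring
      rw [hdp, hcast] at hsum_ge
      have hW := Wfun_le_one β (0+(n+1))
      have hW0 := Wfun_zero β
      have hApos : 0 ≤ A (i - ((n+1:ℕ):ℤ)) := hA0 _
      have hcast2 : β ^ (-((n+1:ℕ):ℤ)) = β ^ (-(n:ℤ)-1) := hcast
      rw [hcast2] at h1
      have := hAlt i
      nlinarith
  · rintro hL
    refine ⟨⟨k, hk⟩, hrep, ?_⟩
    rw [hgreedy_iff]
    -- main claim: A i < 1 for i ≤ k
    have hmain : ∀ i : ℤ, i ≤ k → A i < 1 := by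
      -- digit bound
      have hd : ∀ j : ℤ, j ≤ k → ((d j : ℤ) : ℝ) ≤ β := by
        intro j hj
        obtain ⟨n, hag, hlt⟩ := hL j hj
        have h0 : (d (j - ((0:ℕ):ℤ)) : ℤ) ≤ dstar β 0 := by
          rcases Nat.eq_zero_or_pos n with hn | hn
          · rw [hn] at hlt; exact le_of_lt hlt
          · exact le_of_eq (hag 0 hn)
        simp only [Nat.cast_zero, sub_zero] at h0
        have h1 := dstar_lt_beta β hβ 0
        have h2 : ((d j : ℤ) : ℝ) ≤ ((dstar β 0 : ℤ) : ℝ) := by exact_mod_cast h0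
        linarith
      -- uniform bound on A
      have hC : ∀ i : ℤ, i ≤ k → A i ≤ β * (1 - β⁻¹)⁻¹ := by
        intro i hi
        have hterm : ∀ n : ℕ, (d (i - n) : ℝ) * β ^ (-(n:ℤ)-1) ≤ β * (β⁻¹)^(n+1) := by
          intro n
          have h1 : ((d (i - n) : ℤ) : ℝ) ≤ β := hd _ (by omega)
          have h2 : (d (i - n) : ℝ) ≤ β := by push_cast at h1 ⊢; exact h1
          have h3 : β ^ (-(n:ℤ)-1) = (β⁻¹)^(n+1) := by
            rw [show (-(n:ℤ)-1) = -(((n+1:ℕ)):ℤ) by push_cast; ring, zpow_neg_nat β hβ]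
          rw [h3]
          have h4 : (0:ℝ) < (β⁻¹)^(n+1) := by positivity
          nlinarith [Nat.cast_nonneg (α := ℝ) (d (i - n))]
        have hgeo : Summable (fun n : ℕ => (β⁻¹)^n) :=
          summable_geometric_of_lt_one (by positivity) (inv_lt_one_of_one_lt₀ hβ)
        have hgeo1 : Summable (fun n : ℕ => (β⁻¹)^(n+1)) := (summable_nat_add_iff 1).mpr hgeo
        have hgs : Summable (fun n : ℕ => β * (β⁻¹)^(n+1)) := hgeo1.mul_left β
        have h5 : A i ≤ ∑' n : ℕ, β * (β⁻¹)^(n+1) := Summable.tsum_le_tsum hterm (hS i) hgs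
        have h6 : ∑' n : ℕ, β * (β⁻¹)^(n+1) ≤ β * (1 - β⁻¹)⁻¹ := by
          rw [tsum_mul_left]
          have h7 : ∑' n : ℕ, (β⁻¹)^(n+1) ≤ (1 - β⁻¹)⁻¹ := by
            have h8 := tsum_geometric_of_lt_one (r := β⁻¹) (by positivity) (inv_lt_one_of_one_lt₀ hβ)
            have h9 : ∑' n : ℕ, (β⁻¹)^(n+1) ≤ ∑' n : ℕ, (β⁻¹)^n := by
              apply Summable.tsum_le_tsum _ hgeo1 hgeo
              intro n
              apply pow_le_pow_of_le_one (by positivity) (inv_le_one_of_one_le₀ hβ.le) (by omega)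
            rw [h8] at h9; exact h9
          nlinarith
        linarith
      -- key inequality from the lex condition
      have hkey : ∀ i : ℤ, i ≤ k → ∃ n : ℕ,
          A i ≤ 1 - β ^ (-(n:ℤ)-1) * (1 + Wfun β (n+1) - A (i - ((n+1:ℕ):ℤ))) := by
        intro i hi
        obtain ⟨n, hag, hlt⟩ := hL i hi
        refine ⟨n, ?_⟩
        have h1 := hsplit i (n+1)
        have hterms : ∀ m ∈ Finset.range n, (d (i - m):ℝ) * β^(-(m:ℤ)-1)
            = (dstar β (0+m):ℝ) * β^(-(m:ℤ)-1) := by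
          intro m hm
          simp only [Finset.mem_range] at hm
          have h3 : (d (i - (m:ℤ)) : ℤ) = dstar β m := hag m hm
          have h4 : ((d (i - (m:ℤ)) : ℤ) : ℝ) = ((dstar β m : ℤ) : ℝ) := by rw [h3]
          rw [Nat.zero_add]
          push_cast at h4 ⊢
          rw [h4]
        have hlast : (d (i - n) : ℝ) ≤ (dstar β (0+n) : ℝ) - 1 := by
          have hlt' : (d (i - (n:ℤ)) : ℤ) < dstar β n := hlt
          have h5 : (d (i - (n:ℤ)) : ℤ) + 1 ≤ dstar β (0+n) := by rw [Nat.zero_add]; omega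
          have h2 : ((d (i - (n:ℤ)) : ℤ) : ℝ) + 1 ≤ ((dstar β (0+n) : ℤ) : ℝ) := by exact_mod_cast h5
          push_cast at h2 ⊢; linarith
        have hpos : (0:ℝ) < β ^ (-(n:ℤ)-1) := zpow_pos hβ0 _
        have hsum_le : (∑ m ∈ Finset.range (n+1), (d (i - m):ℝ) * β ^ (-(m:ℤ)-1))
            ≤ (∑ m ∈ Finset.range (n+1), (dstar β (0+m):ℝ) * β ^ (-(m:ℤ)-1)) - β ^ (-(n:ℤ)-1) := by
          rw [Finset.sum_range_succ, Finset.sum_range_succ, Finset.sum_congr rfl hterms]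
          nlinarith
        have hdp := dstar_partial β hβ 0 (n+1)
        have hcast : β ^ (-((n+1:ℕ):ℤ)) = β ^ (-(n:ℤ)-1) := by congr 1; push_cast; ring
        rw [hdp, hcast] at hsum_le
        rw [hcast] at h1
        have hW0 := Wfun_zero β
        have hzz : (0+(n+1)) = n + 1 := by omega
        rw [hzz] at hsum_le
        nlinarith
    -- the sup argument: A i ≤ 1 on i ≤ k
      have hset : BddAbove (A '' {i : ℤ | i ≤ k}) := by
        refine ⟨β * (1 - β⁻¹)⁻¹, ?_⟩
        rintro y ⟨i, hi, rfl⟩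
        exact hC i hi
      have hnonempty : (A '' {i : ℤ | i ≤ k}).Nonempty := ⟨A k, k, le_refl k, rfl⟩
      set S := sSup (A '' {i : ℤ | i ≤ k}) with hSdef
      have hSle1 : S ≤ 1 := by
        by_contra hS1
        push_neg at hS1
        have hub : ∀ i : ℤ, i ≤ k → A i ≤ 1 + β⁻¹ * (S - 1) := by
          intro i hi
          obtain ⟨n, hkey2⟩ := hkey i hi
          have hA' : A (i - ((n+1:ℕ):ℤ)) ≤ S := le_csSup hset ⟨i - ((n+1:ℕ):ℤ), by
            simp only [Set.mem_setOf_eq]; omega, rfl⟩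
          have hpos : (0:ℝ) < β ^ (-(n:ℤ)-1) := zpow_pos hβ0 _
          have hle : β ^ (-(n:ℤ)-1) ≤ β⁻¹ := by
            rw [show (β⁻¹) = β ^ (-1:ℤ) by simp]
            exact zpow_le_zpow_right₀ hβ.le (by omega)
          have hW := Wfun_pos β (n+1)
          have hW2 := Wfun_le_one β (n+1)
          nlinarith
        have hS2 : S ≤ 1 + β⁻¹ * (S - 1) := by
          apply csSup_le hnonempty
          rintro y ⟨i, hi, rfl⟩
          exact hub i hi
        have hβi : β⁻¹ < 1 := inv_lt_one_of_one_lt₀ hβ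
        have hβipos : (0:ℝ) < β⁻¹ := by positivity
        nlinarith
      intro i hi
      obtain ⟨n, hkey2⟩ := hkey i hi
      have hA' : A (i - ((n+1:ℕ):ℤ)) ≤ S := le_csSup hset ⟨i - ((n+1:ℕ):ℤ), by
        simp only [Set.mem_setOf_eq]; omega, rfl⟩
      have hpos : (0:ℝ) < β ^ (-(n:ℤ)-1) := zpow_pos hβ0 _
      have hW := Wfun_pos β (n+1)
      have hW2 := Wfun_le_one β (n+1)
      nlinarith
    intro i
    rcases le_or_gt i k with h | h
    · exact hmain i h
    · exact htail (hmain k (le_refl k)) i h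
end

section
/- Every Parry number β (a real β > 1 whose Rényi expansion of unity is eventually periodic) is an algebraic integer: it is a root of a monic polynomial with integer coefficients, namely its Parry polynomial. -/
lemma x_rec (β : ℝ) (k : ℕ) :
    (Tbeta β)^[k+1] 1 = β * (Tbeta β)^[k] 1 - renyiDigit β k := by
  rw [Function.iterate_succ_apply']
  simp only [Tbeta, renyiDigit, Int.fract]

lemma x_mem (β : ℝ) (k : ℕ) :
    (Tbeta β)^[k] 1 ∈ Set.Icc (0:ℝ) 1 := by
  cases k with
  | zero => simp
  | succ n =>
    rw [Function.iterate_succ_apply']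
    exact ⟨Int.fract_nonneg _, le_of_lt (Int.fract_lt_one _)⟩

lemma x_periodic (β : ℝ) (hβ : 1 < β) (m p : ℕ)
    (hper : ∀ i : ℕ, m ≤ i → renyiDigit β (i + p) = renyiDigit β i) :
    (Tbeta β)^[m+p] 1 = (Tbeta β)^[m] 1 := by
  set x : ℕ → ℝ := fun k => (Tbeta β)^[k] 1 with hx
  have key : ∀ k : ℕ, x (m+k+p) - x (m+k) = β^k * (x (m+p) - x m) := by
    intro k
    induction k with
    | zero => simp
    | succ n ih =>
      have h1 : m + (n+1) + p = (m + n + p) + 1 := by omega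
      have h2 : m + (n+1) = (m + n) + 1 := by omega
      have h3 : m + n + p = (m + n) + p := by omega
      rw [h1, h2]
      show x ((m+n+p)+1) - x ((m+n)+1) = _
      have e1 : x ((m+n+p)+1) = β * x (m+n+p) - renyiDigit β (m+n+p) := x_rec β _
      have e2 : x ((m+n)+1) = β * x (m+n) - renyiDigit β (m+n) := x_rec β _
      have e3 : renyiDigit β (m+n+p) = renyiDigit β (m+n) := by
        rw [h3]; exact hper (m+n) (by omega)
      rw [e1, e2, e3]
      ring_nf
      ring_nf at ih
      rw [show β * x (m+n+p) - β * x (m+n) = β * (x (m+n+p) - x (m+n)) by ring,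
        show x (m+n+p) - x (m+n) = x (m+n+p) - x (m+n) from rfl]
      nlinarith [ih]
  by_contra hne
  have hε : 0 < |x (m+p) - x m| := by
    rw [abs_pos]; intro h; exact hne (by linarith [sub_eq_zero.mp h])
  obtain ⟨k, hk⟩ := pow_unbounded_of_one_lt (2 / |x (m+p) - x m|) hβ
  have hb : |x (m+k+p) - x (m+k)| ≤ 2 := by
    have h1 := x_mem β (m+k+p)
    have h2 := x_mem β (m+k)
    rw [abs_le]
    constructor <;> [linarith [h1.1, h2.2]; linarith [h1.2, h2.1]]
  rw [key k, abs_mul, abs_of_pos (pow_pos (by linarith) k)] at hb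
  have : 2 / |x (m+p) - x m| * |x (m+p) - x m| < β ^ k * |x (m+p) - x m| := by
    exact mul_lt_mul_of_pos_right hk hε
  rw [div_mul_cancel₀ _ (ne_of_gt hε)] at this
  linarith

lemma x_eq_sum (β : ℝ) (k : ℕ) :
    (Tbeta β)^[k] 1 = β^k - ∑ i ∈ Finset.range k, (renyiDigit β i : ℝ) * β^(k-1-i) := by
  induction k with
  | zero => simp
  | succ n ih =>
    rw [x_rec β n, ih, Finset.sum_range_succ]
    rw [mul_sub, Finset.mul_sum]
    have h1 : ∀ i ∈ Finset.range n,
        β * ((renyiDigit β i : ℝ) * β^(n-1-i)) = (renyiDigit β i : ℝ) * β^(n+1-1-i) := by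
      intro i hi
      rw [Finset.mem_range] at hi
      have : n + 1 - 1 - i = (n - 1 - i) + 1 := by omega
      rw [this, pow_succ]; ring
    rw [Finset.sum_congr rfl h1]
    have h2 : n + 1 - 1 - n = 0 := by omega
    rw [h2]
    rw [← pow_succ']
    push_cast
    ring

/-- every Parry number β (real β > 1 with eventually periodic
Rényi expansion of unity) is an algebraic integer, i.e. a root of a monic
polynomial with integer coefficients (its Parry polynomial). -/
theorem parry_number_isIntegral (β : ℝ) (hβ : 1 < β)
    (hper : ∃ m p : ℕ, 0 < p ∧ ∀ i : ℕ, m ≤ i → renyiDigit β (i + p) = renyiDigit β i) :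
    IsIntegral ℤ β := by
  obtain ⟨m, p, hp, hper⟩ := hper
  open Polynomial in
  refine ⟨X^(m+p) + ((∑ i ∈ Finset.range m, C (renyiDigit β i) * X^(m-1-i))
      - (∑ i ∈ Finset.range (m+p), C (renyiDigit β i) * X^(m+p-1-i)) - X^m), ?_, ?_⟩
  · apply Polynomial.monic_X_pow_add
    have hle : ∀ (k : ℕ) (s : Finset ℕ), k ≤ m + p →
        (∑ i ∈ s, Polynomial.C (renyiDigit β i) * Polynomial.X^(k-1-i) : Polynomial ℤ).degree
          ≤ ((m + p - 1 : ℕ) : WithBot ℕ) := by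
      intro k s hk
      refine le_trans (Polynomial.degree_sum_le _ _) (Finset.sup_le fun i _ => ?_)
      refine le_trans (Polynomial.degree_C_mul_X_pow_le _ _) ?_
      exact Nat.cast_le.mpr (by omega)
    have hlt : ((m + p - 1 : ℕ) : WithBot ℕ) < ((m + p : ℕ) : WithBot ℕ) :=
      Nat.cast_lt.mpr (by omega)
    refine lt_of_le_of_lt ?_ hlt
    refine le_trans (Polynomial.degree_sub_le _ _) (max_le (le_trans (Polynomial.degree_sub_le _ _) (max_le ?_ ?_)) ?_)
    · exact hle m _ (by omega)
    · exact hle (m+p) _ (by omega)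
    · rw [Polynomial.degree_X_pow]
      have hm : m ≤ m + p - 1 := by omega
      exact Nat.cast_le.mpr hm
  · have hx := x_periodic β hβ m p hper
    rw [x_eq_sum β (m+p), x_eq_sum β m] at hx
    rw [← Polynomial.aeval_def]
    simp only [map_add, map_sub, map_sum, map_mul, map_pow, Polynomial.aeval_X,
      Polynomial.aeval_C, map_intCast, algebraMap_int_eq, eq_intCast]
    linarith [hx]
end

section
/- The set {Δ_k : k ∈ ℕ} of distances between consecutive β-integers, where Δ_k = Σ_{i=1}^∞ t_{i+k} β^{-i}, is finite if and only if the Rényi expansion of unity d_β(1) = t_1 t_2 ⋯ is eventually periodic (i.e., β is a Parry number). -/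
/-- The distance `Δ_k = Σ_{i=1}^∞ t_{i+k} β^{-i}` (0-indexed digits). -/
noncomputable def distDelta (β : ℝ) (k : ℕ) : ℝ :=
  ∑' i : ℕ, (renyiDigit β (i + k) : ℝ) / β ^ (i + 1)

lemma iter_mem (β : ℝ) (j : ℕ) : 0 ≤ (Tbeta β)^[j] 1 ∧ (Tbeta β)^[j] 1 ≤ 1 := by
  induction j with
  | zero => norm_num
  | succ n ih =>
    rw [Function.iterate_succ_apply']
    exact ⟨Int.fract_nonneg _, le_of_lt (Int.fract_lt_one _)⟩

lemma iter_rec (β : ℝ) (j : ℕ) :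
    (Tbeta β)^[j+1] 1 = β * (Tbeta β)^[j] 1 - (renyiDigit β j : ℝ) := by
  rw [Function.iterate_succ_apply', renyiDigit, Tbeta, Int.fract]

lemma digit_nonneg (β : ℝ) (hβ : 1 < β) (j : ℕ) : 0 ≤ renyiDigit β j :=
  Int.floor_nonneg.2 (mul_nonneg (by linarith) (iter_mem β j).1)

lemma partial_sum (β : ℝ) (hβ : β ≠ 0) (k n : ℕ) :
    ∑ i ∈ Finset.range n, (renyiDigit β (i + k) : ℝ) / β ^ (i + 1)
      = (Tbeta β)^[k] 1 - (Tbeta β)^[k + n] 1 / β ^ n := by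
  induction n with
  | zero => simp
  | succ n ih =>
    rw [Finset.sum_range_succ, ih]
    have hrec : (Tbeta β)^[k + (n+1)] 1
        = β * (Tbeta β)^[k + n] 1 - (renyiDigit β (k + n) : ℝ) := by
      rw [show k + (n+1) = (k + n) + 1 from rfl, iter_rec]
    rw [hrec, show n + k = k + n from Nat.add_comm n k]
    field_simp
    ring
  
lemma distDelta_eq (β : ℝ) (hβ : 1 < β) (k : ℕ) :
    distDelta β k = (Tbeta β)^[k] 1 := by
  have hnn : ∀ i : ℕ, 0 ≤ (renyiDigit β (i + k) : ℝ) / β ^ (i + 1) := fun i =>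
    div_nonneg (by exact_mod_cast digit_nonneg β hβ _) (by positivity)
  have hsum : HasSum (fun i : ℕ => (renyiDigit β (i + k) : ℝ) / β ^ (i + 1))
      ((Tbeta β)^[k] 1) := by
    rw [hasSum_iff_tendsto_nat_of_nonneg hnn]
    have h1 : Filter.Tendsto (fun n : ℕ => (Tbeta β)^[k + n] 1 / β ^ n)
        Filter.atTop (nhds 0) := by
      have hb : Filter.Tendsto (fun n : ℕ => (β ^ n)⁻¹) Filter.atTop (nhds 0) := by
        apply tendsto_inv_atTop_zero.comp
        exact tendsto_pow_atTop_atTop_of_one_lt hβ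
      apply squeeze_zero (fun n => div_nonneg (iter_mem β _).1 (by positivity))
        (fun n => ?_) hb
      rw [div_eq_mul_inv]
      calc (Tbeta β)^[k + n] 1 * (β ^ n)⁻¹ ≤ 1 * (β ^ n)⁻¹ :=
            mul_le_mul_of_nonneg_right (iter_mem β _).2 (by positivity)
        _ = (β ^ n)⁻¹ := one_mul _
    have := Filter.Tendsto.sub (tendsto_const_nhds
      (x := (Tbeta β)^[k] 1) (f := Filter.atTop)) h1
    rw [sub_zero] at this
    exact this.congr (fun n => (partial_sum β (by linarith) k n).symm)
  exact hsum.tsum_eq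

/-- the set `{Δ_k : k ∈ ℕ}` of distances between consecutive
β-integers is finite iff the Rényi expansion of unity of β is eventually
periodic (i.e. β is a Parry number). -/
theorem distDelta_finite_iff_parry (β : ℝ) (hβ : 1 < β) :
    (Set.range (distDelta β)).Finite ↔
      ∃ m p : ℕ, 0 < p ∧ ∀ i : ℕ, m ≤ i → renyiDigit β (i + p) = renyiDigit β i := by
  constructor
  · intro hfin
    have hninj : ¬ Function.Injective (distDelta β) := by
      intro hinj
      exact (Set.infinite_range_of_injective hinj) hfin
    rw [Function.not_injective_iff] at hninj
    obtain ⟨a, b, hab, hne⟩ := hninj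
    wlog hlt : a < b generalizing a b
    · exact this b a hab.symm hne.symm (by omega)
    refine ⟨a, b - a, by omega, fun i hi => ?_⟩
    have hx : (Tbeta β)^[a] 1 = (Tbeta β)^[b] 1 := by
      rw [← distDelta_eq β hβ, ← distDelta_eq β hβ, hab]
    have hiter : (Tbeta β)^[i + (b - a)] 1 = (Tbeta β)^[i] 1 := by
      have h1 : i + (b - a) = (i - a) + b := by omega
      have h2 : i = (i - a) + a := by omega
      rw [h1, Function.iterate_add_apply, ← hx, ← Function.iterate_add_apply, ← h2]
    rw [renyiDigit, renyiDigit, hiter]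
  · rintro ⟨m, p, hp, hper⟩
    apply Set.Finite.subset (Set.Finite.image (distDelta β) (Set.finite_Iio (m + p)))
    rintro _ ⟨k, rfl⟩
    induction k using Nat.strong_induction_on with
    | _ k ih =>
      by_cases hk : k < m + p
      · exact ⟨k, hk, rfl⟩
      · have heq : distDelta β k = distDelta β (k - p) := by
          unfold distDelta
          congr 1
          funext i
          have : i + k = (i + (k - p)) + p := by omega
          rw [this, hper _ (by omega)]
        rw [heq]
        exact ih (k - p) (by omega)
end

section
/- Let β be a simple Parry number with d_β(1) = t_1 ⋯ t_m and Parry polynomial p(x) = x^m − t_1 x^{m-1} − ⋯ − t_m. Define Δ_i = β^i − Σ_{j=1}^{i} t_j β^{i-j} and ρ_i = β^{m-1-i}/Σ_{k=0}^{m-1} β^k for 0 ≤ i ≤ m−1. Then Σ_{i=0}^{m-1} ρ_i Δ_i = (β−1)/(β^m − 1) · p'(β). -/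
open Polynomial in
/-- let β be a simple Parry number with `d_β(1) = t_1 ⋯ t_m` and
Parry polynomial `p(x) = x^m − t_1 x^{m-1} − ⋯ − t_m`. With
`Δ_i = β^i − Σ_{j=1}^i t_j β^{i−j}` and `ρ_i = β^{m−1−i} / Σ_{k=0}^{m−1} β^k`,
one has `Σ_{i=0}^{m−1} ρ_i Δ_i = (β−1)/(β^m − 1) · p'(β)`. -/
theorem freq_dot_distances (β : ℝ) (hβ : 1 < β)
    (m : ℕ) (hm : 1 ≤ m) (t : ℕ → ℕ)
    (ht : ∀ i : ℕ, i < m → (t i : ℤ) = renyiDigit β i)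
    (hsimple : ∀ i : ℕ, m ≤ i → renyiDigit β i = 0)
    (hlast : t (m - 1) ≠ 0) :
    ∑ i ∈ Finset.range m,
        (β ^ (m - 1 - i) / ∑ k ∈ Finset.range m, β ^ k) *
          (β ^ i - ∑ j ∈ Finset.range i, (t j : ℝ) * β ^ (i - 1 - j)) =
      (β - 1) / (β ^ m - 1) *
        Polynomial.eval β (Polynomial.derivative
          ((X : ℝ[X]) ^ m - ∑ j ∈ Finset.range m, C (t j : ℝ) * X ^ (m - 1 - j))) := by
  have hβ0 : (0:ℝ) < β := lt_trans one_pos hβ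
  have hpm : (1:ℝ) < β ^ m := one_lt_pow₀ hβ (by omega)
  have hS : ∑ k ∈ Finset.range m, β ^ k = (β ^ m - 1) / (β - 1) :=
    geom_sum_eq (ne_of_gt hβ) m
  have hA : ∑ i ∈ Finset.range m, β ^ (m - 1 - i) *
      (β ^ i - ∑ j ∈ Finset.range i, (t j : ℝ) * β ^ (i - 1 - j)) =
      Polynomial.eval β (Polynomial.derivative
        ((X : ℝ[X]) ^ m - ∑ j ∈ Finset.range m, C (t j : ℝ) * X ^ (m - 1 - j))) := by
    have hR : Polynomial.eval β (Polynomial.derivative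
        ((X : ℝ[X]) ^ m - ∑ j ∈ Finset.range m, C (t j : ℝ) * X ^ (m - 1 - j))) =
        (m : ℝ) * β ^ (m - 1) -
          ∑ j ∈ Finset.range m, (t j : ℝ) * (((m - 1 - j : ℕ) : ℝ) * β ^ (m - 1 - j - 1)) := by
      simp [Polynomial.derivative_sum, Polynomial.derivative_X_pow,
        Polynomial.eval_finset_sum, mul_assoc]
    rw [hR]
    have hsplit : ∀ i ∈ Finset.range m, β ^ (m - 1 - i) *
        (β ^ i - ∑ j ∈ Finset.range i, (t j : ℝ) * β ^ (i - 1 - j)) =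
        β ^ (m - 1) - ∑ j ∈ Finset.range i, (t j : ℝ) * β ^ (m - 1 - j - 1) := by
      intro i hi
      rw [Finset.mem_range] at hi
      rw [mul_sub, ← pow_add, Finset.mul_sum]
      congr 1
      · congr 1; omega
      · refine Finset.sum_congr rfl fun j hj => ?_
        rw [Finset.mem_range] at hj
        rw [mul_comm (β ^ (m - 1 - i)), mul_assoc, ← pow_add]
        congr 2
        omega
    rw [Finset.sum_congr rfl hsplit, Finset.sum_sub_distrib, Finset.sum_const,
      Finset.card_range, nsmul_eq_mul]
    congr 1
    rw [Finset.sum_comm' (t' := Finset.range m) (s' := fun j => Finset.Ico (j+1) m)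
      (by intro i j; simp only [Finset.mem_range, Finset.mem_Ico]; omega)]
    refine Finset.sum_congr rfl fun j hj => ?_
    rw [Finset.mem_range] at hj
    rw [Finset.sum_const, Nat.card_Ico, nsmul_eq_mul]
    have h1 : ((m - (j+1) : ℕ) : ℝ) = ((m - 1 - j : ℕ) : ℝ) := by congr 1; omega
    rw [h1]; ring
  have hrw : ∀ i ∈ Finset.range m,
      (β ^ (m - 1 - i) / ∑ k ∈ Finset.range m, β ^ k) *
        (β ^ i - ∑ j ∈ Finset.range i, (t j : ℝ) * β ^ (i - 1 - j)) =
      (β ^ (m - 1 - i) *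
        (β ^ i - ∑ j ∈ Finset.range i, (t j : ℝ) * β ^ (i - 1 - j))) /
        ∑ k ∈ Finset.range m, β ^ k := fun i _ => by ring
  rw [Finset.sum_congr rfl hrw, ← Finset.sum_div, hA, hS]
  rw [div_div_eq_mul_div]
  ring
end

section
/- Let β = τ = (1+√5)/2. For every n ∈ ℕ, the n-th nonnegative τ-integer satisfies |b_n − c_τ n| ≤ 1/τ³, where c_τ = (τ² + 1)/τ³. -/
/-- The nonnegative β-integers: nonnegative reals whose β-expansion has
vanishing fractional part. -/
def ZbetaPlus (β : ℝ) : Set ℝ :=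
  {x : ℝ | 0 ≤ x ∧ ∃ d : ℤ → ℕ, IsBetaExpansion β x d ∧ ∀ i : ℤ, i < 0 → d i = 0}

/-- The β-integers: `ℤ_β = (−ℤ_β^+) ∪ ℤ_β^+`. -/
def Zbeta (β : ℝ) : Set ℝ := {x : ℝ | x ∈ ZbetaPlus β ∨ -x ∈ ZbetaPlus β}

namespace GoldenBd

open Finset

lemma lt_fib : ∀ n : ℕ, n < Nat.fib (n + 2)
  | 0 => by simp
  | (n + 1) => by
    have h2 : Nat.fib (n + 3) = Nat.fib (n + 1) + Nat.fib (n + 2) := Nat.fib_add_two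
    have h3 := lt_fib n
    have h1 : 0 < Nat.fib (n + 1) := Nat.fib_pos.2 (Nat.succ_pos n)
    show n + 1 < Nat.fib (n + 3)
    omega

lemma greatestFib_eq {n j : ℕ} (hl : Nat.fib (j + 2) ≤ n) (hu : n < Nat.fib (j + 3)) :
    Nat.greatestFib n = j + 2 := by
  have h1 : j + 2 ≤ Nat.greatestFib n := Nat.le_greatestFib.2 hl
  have h2 : Nat.greatestFib n < j + 3 := Nat.greatestFib_lt.2 hu
  omega

noncomputable def B (τ : ℝ) : ℕ → ℝ
  | 0 => 0
  | (n + 1) =>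
    have : n + 1 - Nat.fib (Nat.greatestFib (n + 1)) < n + 1 :=
      Nat.sub_lt (Nat.succ_pos n) (Nat.fib_pos.2 (Nat.greatestFib_pos.2 (Nat.succ_pos n)))
    τ ^ (Nat.greatestFib (n + 1) - 2) + B τ (n + 1 - Nat.fib (Nat.greatestFib (n + 1)))

@[simp] lemma B_zero (τ : ℝ) : B τ 0 = 0 := by simp [B]

lemma exists_j {n : ℕ} (hn : 0 < n) :
    ∃ j, Nat.fib (j + 2) ≤ n ∧ n < Nat.fib (j + 3) := by
  have h2 : 2 ≤ Nat.greatestFib n := Nat.le_greatestFib.2 (by simp; omega)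
  obtain ⟨j, hj⟩ : ∃ j, Nat.greatestFib n = j + 2 := ⟨Nat.greatestFib n - 2, by omega⟩
  refine ⟨j, ?_, ?_⟩
  · have := Nat.fib_greatestFib_le n; rwa [hj] at this
  · have := Nat.lt_fib_greatestFib_add_one n; rwa [hj] at this

lemma B_rec (τ : ℝ) {n j : ℕ} (hl : Nat.fib (j + 2) ≤ n) (hu : n < Nat.fib (j + 3)) :
    B τ n = τ ^ j + B τ (n - Nat.fib (j + 2)) := by
  have hn : 0 < n := lt_of_lt_of_le (Nat.fib_pos.2 (by omega)) hl
  obtain ⟨m, rfl⟩ := Nat.exists_eq_succ_of_ne_zero hn.ne'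
  rw [show B τ (m + 1) =
      τ ^ (Nat.greatestFib (m + 1) - 2) + B τ (m + 1 - Nat.fib (Nat.greatestFib (m + 1))) from
        by simp [B], greatestFib_eq hl hu]
  simp

lemma sub_lt_fib {n j : ℕ} (hu : n < Nat.fib (j + 3)) :
    n - Nat.fib (j + 2) < Nat.fib (j + 1) := by
  have h2 : Nat.fib (j + 3) = Nat.fib (j + 1) + Nat.fib (j + 2) := Nat.fib_add_two
  have h3 : 0 < Nat.fib (j + 1) := Nat.fib_pos.2 (Nat.succ_pos j)
  omega

section tau
variable {τ : ℝ} (h2 : τ ^ 2 = τ + 1) (h1 : 1 < τ)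

include h1 in
lemma tau_pos : 0 < τ := lt_trans one_pos h1

include h2 in
lemma pow_rec (k : ℕ) : τ ^ (k + 2) = τ ^ (k + 1) + τ ^ k := by
  calc τ ^ (k + 2) = τ ^ k * τ ^ 2 := by ring
    _ = τ ^ k * (τ + 1) := by rw [h2]
    _ = τ ^ (k + 1) + τ ^ k := by ring

include h2 h1 in
lemma inv_rec (k : ℕ) : 1 / τ ^ k = 1 / τ ^ (k + 1) + 1 / τ ^ (k + 2) := by
  have hτ0 : τ ≠ 0 := (tau_pos h1).ne'
  field_simp
  linear_combination (τ ^ (2 * k + 1)) * h2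

include h1 in
lemma inv_pos' (a : ℕ) : 0 < 1 / τ ^ a := div_pos one_pos (pow_pos (tau_pos h1) a)

include h1 in
lemma inv_mono {a b : ℕ} (hab : a ≤ b) : 1 / τ ^ b ≤ 1 / τ ^ a :=
  one_div_le_one_div_of_le (pow_pos (tau_pos h1) a) (pow_le_pow_right₀ h1.le hab)

include h2 h1 in
lemma key (j : ℕ) :
    (τ ^ 2 + 1) / τ ^ 3 * Nat.fib (j + 2) = τ ^ j - (-1 : ℝ) ^ j * (1 / τ ^ (j + 4)) := by
  have hτ0 : τ ≠ 0 := (tau_pos h1).ne'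
  induction j using Nat.strong_induction_on with
  | _ j ih =>
    match j with
    | 0 =>
      show (τ ^ 2 + 1) / τ ^ 3 * (Nat.fib 2 : ℝ) = _
      norm_num [Nat.fib]
      field_simp
      linear_combination ((-1) * τ ^ 0 + (-1) * τ ^ 2) * h2
    | 1 =>
      show (τ ^ 2 + 1) / τ ^ 3 * (Nat.fib 3 : ℝ) = _
      norm_num [Nat.fib]
      field_simp
      linear_combination ((1) * τ ^ 0 + (-1) * τ ^ 1 + (-1) * τ ^ 3 + (-1) * τ ^ 4) * h2
    | (j + 2) =>
      have e1 := ih j (by omega)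
      have e2 := ih (j + 1) (by omega)
      have hfib : Nat.fib (j + 2 + 2) = Nat.fib (j + 2) + Nat.fib (j + 1 + 2) :=
        Nat.fib_add_two
      rw [hfib]
      push_cast
      rw [mul_add, e1, e2]
      have hp : τ ^ (j + 2) = τ ^ (j + 1) + τ ^ j := pow_rec h2 j
      have hr : 1 / τ ^ (j + 4) = 1 / τ ^ (j + 5) + 1 / τ ^ (j + 6) := inv_rec h2 h1 (j + 4)
      linear_combination (-1 : ℝ) * hp - (-1 : ℝ) ^ j * hr

end tau

section tau2
variable {τ : ℝ} (h2 : τ ^ 2 = τ + 1) (h1 : 1 < τ)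

include h2 h1 in
lemma B_bound : ∀ k : ℕ, ∀ n : ℕ, n < Nat.fib (k + 2) →
    -(1 / τ ^ 4 - 1 / τ ^ (k + 4)) ≤ B τ n - (τ ^ 2 + 1) / τ ^ 3 * n ∧
      B τ n - (τ ^ 2 + 1) / τ ^ 3 * n ≤ 1 / τ ^ 3 - 1 / τ ^ (k + 4) := by
  intro k
  induction k using Nat.strong_induction_on with
  | _ k ihk =>
    intro n hn
    rcases Nat.eq_zero_or_pos n with rfl | hn0
    · have i1 : 1 / τ ^ (k + 4) ≤ 1 / τ ^ 4 := inv_mono h1 (by omega)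
      have i2 : 1 / τ ^ (k + 4) ≤ 1 / τ ^ 3 := inv_mono h1 (by omega)
      simp only [B_zero, Nat.cast_zero, mul_zero, sub_zero]
      constructor <;> linarith
    · obtain ⟨j, hjl, hju⟩ := exists_j hn0
      have hjk : j + 1 ≤ k := by
        by_contra hc
        have : Nat.fib (k + 2) ≤ Nat.fib (j + 2) := Nat.fib_mono (by omega)
        omega
      set m := n - Nat.fib (j + 2) with hm
      have hmfib : m < Nat.fib (j + 1) := sub_lt_fib hju
      have hrec : B τ n = τ ^ j + B τ m := B_rec τ hjl hju
      have hcast : (n : ℝ) = Nat.fib (j + 2) + (m : ℝ) := by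
        have : n = Nat.fib (j + 2) + m := by omega
        rw [this]; push_cast; ring
      have hkey := key h2 h1 j
      have he : B τ n - (τ ^ 2 + 1) / τ ^ 3 * n =
          (B τ m - (τ ^ 2 + 1) / τ ^ 3 * m) + (-1 : ℝ) ^ j * (1 / τ ^ (j + 4)) := by
        rw [hrec, hcast]
        linear_combination (-1 : ℝ) * hkey
      rcases Nat.eq_zero_or_pos j with rfl | hj0
      · -- j = 0 : m = 0
        have hm0 : m = 0 := by
          have hfib1 : Nat.fib (0 + 1) = 1 := rfl
          omega
        have hk1 : 1 ≤ k := hjk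
        rw [hm0] at he
        simp only [B_zero, Nat.cast_zero, mul_zero, sub_zero, pow_zero, zero_add, one_mul] at he
        rw [he]
        have i1 : 1 / τ ^ (k + 4) ≤ 1 / τ ^ 5 := inv_mono h1 (by omega)
        have i2 : 1 / τ ^ 3 = 1 / τ ^ 4 + 1 / τ ^ 5 := inv_rec h2 h1 3
        have i3 : 0 < 1 / τ ^ (k + 4) := inv_pos' h1 _
        have i4 : 1 / τ ^ (k + 4) ≤ 1 / τ ^ 4 := inv_mono h1 (by omega)
        have i5 : (1:ℝ) / τ ^ (0 + 4) = 1 / τ ^ 4 := by norm_num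
        constructor <;> linarith
      · -- j ≥ 1
        obtain ⟨i, rfl⟩ : ∃ i, j = i + 1 := ⟨j - 1, by omega⟩
        have ihm := ihk i (by omega) m (by
          have : Nat.fib (i + 1 + 1) = Nat.fib (i + 2) := rfl
          omega)
        have hsplit : 1 / τ ^ (i + 4) = 1 / τ ^ (i + 5) + 1 / τ ^ (i + 6) := inv_rec h2 h1 (i + 4)
        have hmono1 : 1 / τ ^ (k + 4) ≤ 1 / τ ^ (i + 6) := inv_mono h1 (by omega)
        have hmono2 : 1 / τ ^ (k + 4) ≤ 1 / τ ^ (i + 4) := inv_mono h1 (by omega)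
        have hpow1 : (1:ℝ) / τ ^ (i + 1 + 4) = 1 / τ ^ (i + 5) := by norm_num
        have hpos : (0:ℝ) < 1 / τ ^ (i + 5) := inv_pos' h1 _
        rw [hpow1] at he
        rcases Nat.even_or_odd (i + 1) with hpar | hpar
        · have hsign : (-1 : ℝ) ^ (i + 1) = 1 := hpar.neg_one_pow
          rw [hsign, one_mul] at he
          rw [he]
          constructor
          · linarith [ihm.1]
          · linarith [ihm.2]
        · have hsign : (-1 : ℝ) ^ (i + 1) = -1 := hpar.neg_one_pow
          rw [hsign, neg_one_mul] at he
          rw [he]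
          constructor
          · linarith [ihm.1]
          · linarith [ihm.2]

end tau2

section mono
variable {τ : ℝ} (h2 : τ ^ 2 = τ + 1) (h1 : 1 < τ)

include h1 in
lemma B_nonneg : ∀ n : ℕ, 0 ≤ B τ n := by
  intro n
  induction n using Nat.strong_induction_on with
  | _ n ih =>
    rcases Nat.eq_zero_or_pos n with rfl | hn0
    · simp
    · obtain ⟨j, hjl, hju⟩ := exists_j hn0
      rw [B_rec τ hjl hju]
      have hlt : n - Nat.fib (j + 2) < n := by
        have : 0 < Nat.fib (j + 2) := Nat.fib_pos.2 (by omega)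
        omega
      exact add_nonneg (pow_nonneg (tau_pos h1).le j) (ih _ hlt)

include h2 h1 in
lemma B_lt_pow : ∀ n : ℕ, ∀ k : ℕ, n < Nat.fib (k + 2) → B τ n < τ ^ k := by
  intro n
  induction n using Nat.strong_induction_on with
  | _ n ih =>
    intro k hn
    rcases Nat.eq_zero_or_pos n with rfl | hn0
    · simpa using pow_pos (tau_pos h1) k
    · obtain ⟨j, hjl, hju⟩ := exists_j hn0
      have hjk : j + 1 ≤ k := by
        by_contra hc
        have : Nat.fib (k + 2) ≤ Nat.fib (j + 2) := Nat.fib_mono (by omega)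
        omega
      set m := n - Nat.fib (j + 2) with hm
      have hmfib : m < Nat.fib (j + 1) := sub_lt_fib hju
      have hmlt : m < n := by
        have : 0 < Nat.fib (j + 2) := Nat.fib_pos.2 (by omega)
        omega
      rw [B_rec τ hjl hju]
      rcases Nat.eq_zero_or_pos j with rfl | hj0
      · have hm0 : m = 0 := by
          have hfib1 : Nat.fib (0 + 1) = 1 := rfl
          omega
        rw [← hm, hm0]
        simp only [B_zero, pow_zero, add_zero]
        exact one_lt_pow₀ h1 (by omega)
      · obtain ⟨i, rfl⟩ : ∃ i, j = i + 1 := ⟨j - 1, by omega⟩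
        have hBm : B τ m < τ ^ i := ih m hmlt i (by
          have : Nat.fib (i + 1 + 1) = Nat.fib (i + 2) := rfl
          omega)
        have hstep : τ ^ (i + 1) + τ ^ i = τ ^ (i + 2) := (pow_rec h2 i).symm
        have hle : τ ^ (i + 2) ≤ τ ^ k := pow_le_pow_right₀ h1.le (by omega)
        linarith

include h2 h1 in
lemma B_strictMono : StrictMono (B τ) := by
  have main : ∀ n : ℕ, ∀ m : ℕ, m < n → B τ m < B τ n := by
    intro n
    induction n using Nat.strong_induction_on with
    | _ n ih =>
      intro m hmn
      have hn0 : 0 < n := by omega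
      obtain ⟨j, hjl, hju⟩ := exists_j hn0
      rw [B_rec τ hjl hju]
      rcases lt_or_ge m (Nat.fib (j + 2)) with hcase | hcase
      · have h1' : B τ m < τ ^ j := B_lt_pow h2 h1 m j hcase
        have h2' : 0 ≤ B τ (n - Nat.fib (j + 2)) := B_nonneg h1 _
        linarith
      · have hmu : m < Nat.fib (j + 3) := lt_trans hmn hju
        rw [B_rec τ hcase hmu]
        have hfibpos : 0 < Nat.fib (j + 2) := Nat.fib_pos.2 (by omega)
        have hlt1 : n - Nat.fib (j + 2) < n := by omega
        have hlt2 : m - Nat.fib (j + 2) < n - Nat.fib (j + 2) := by omega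
        exact add_lt_add_right (ih _ hlt1 _ hlt2) _
  exact fun a b hab => main b a hab

end mono

/-! ### Valid digit strings -/

def Good (d : ℕ → ℕ) : Prop :=
  (∀ i, d i ≤ 1) ∧ ∀ i, d (i + 1) = 1 → d i = 0

noncomputable def vR (τ : ℝ) (d : ℕ → ℕ) (K : ℕ) : ℝ :=
  ∑ i ∈ Finset.range K, (d i : ℝ) * τ ^ i

def vF (d : ℕ → ℕ) (K : ℕ) : ℕ :=
  ∑ i ∈ Finset.range K, d i * Nat.fib (i + 2)

section good
variable {τ : ℝ} (h2 : τ ^ 2 = τ + 1) (h1 : 1 < τ)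

include h2 h1 in
lemma vR_lt {d : ℕ → ℕ} (hd : Good d) : ∀ K, vR τ d K < τ ^ K := by
  intro K
  induction K using Nat.strong_induction_on with
  | _ K ih =>
    match K with
    | 0 => simpa [vR] using one_pos
    | (K + 1) =>
      rw [vR, Finset.sum_range_succ, ← vR]
      rcases Nat.lt_or_ge (d K) 1 with hdK | hdK
      · have hdK0 : d K = 0 := by omega
        rw [hdK0]
        have := ih K (by omega)
        have hp : τ ^ K < τ ^ (K + 1) := pow_lt_pow_right₀ h1 (by omega)
        simpa using lt_trans this hp
      · have hdK1 : d K = 1 := le_antisymm (hd.1 K) hdK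
        rw [hdK1]
        match K with
        | 0 => simpa [vR] using h1
        | (K + 1) =>
          have hd0 : d K = 0 := hd.2 K hdK1
          rw [vR, Finset.sum_range_succ, ← vR, hd0]
          have := ih K (by omega)
          have hstep : τ ^ (K + 2) = τ ^ (K + 1) + τ ^ K := pow_rec h2 K
          push_cast
          simp only [Nat.cast_zero, zero_mul, add_zero, Nat.cast_one, one_mul]
          linarith

end good

lemma vF_lt {d : ℕ → ℕ} (hd : Good d) : ∀ K, vF d K < Nat.fib (K + 2) := by
  intro K
  induction K using Nat.strong_induction_on with
  | _ K ih =>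
    match K with
    | 0 => simp [vF]
    | (K + 1) =>
      rw [vF, Finset.sum_range_succ, ← vF]
      have hfle : Nat.fib (K + 2) ≤ Nat.fib (K + 3) := Nat.fib_mono (by omega)
      rcases Nat.lt_or_ge (d K) 1 with hdK | hdK
      · have hdK0 : d K = 0 := by omega
        have := ih K (by omega)
        have e1 : Nat.fib (K + 1 + 2) = Nat.fib (K + 3) := rfl
        rw [hdK0]
        omega
      · have hdK1 : d K = 1 := le_antisymm (hd.1 K) hdK
        rw [hdK1]
        match K with
        | 0 => simp [vF, Nat.fib]
        | (K + 1) =>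
          have hd0 : d K = 0 := hd.2 K hdK1
          rw [vF, Finset.sum_range_succ, ← vF, hd0]
          have := ih K (by omega)
          have hstep : Nat.fib (K + 4) = Nat.fib (K + 2) + Nat.fib (K + 3) := Nat.fib_add_two
          have hstep2 : Nat.fib (K + 1 + 2) = Nat.fib (K + 3) := rfl
          have hstep3 : Nat.fib (K + 1 + 1 + 2) = Nat.fib (K + 4) := rfl
          omega

lemma vF_support {d : ℕ → ℕ} (hd : Good d) {K j : ℕ} (hv : vF d K < Nat.fib (j + 2)) :
    ∀ i, j ≤ i → i < K → d i = 0 := by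
  intro i hji hiK
  by_contra hne
  have hdi : d i = 1 := by have := hd.1 i; omega
  have hterm : Nat.fib (i + 2) ≤ vF d K := by
    have h1 : d i * Nat.fib (i + 2) ≤ ∑ a ∈ Finset.range K, d a * Nat.fib (a + 2) :=
      Finset.single_le_sum (f := fun a => d a * Nat.fib (a + 2))
        (fun a _ => Nat.zero_le _) (Finset.mem_range.2 hiK)
    rw [vF, hdi] at *
    omega
  have : Nat.fib (j + 2) ≤ Nat.fib (i + 2) := Nat.fib_mono (by omega)
  omega

section valeq
variable {τ : ℝ} (h2 : τ ^ 2 = τ + 1) (h1 : 1 < τ)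

omit h2 h1 in
lemma B_vF {d : ℕ → ℕ} (hd : Good d) : ∀ K, B τ (vF d K) = vR τ d K := by
  intro K
  induction K with
  | zero => simp [vF, vR]
  | succ K ih =>
    rcases Nat.lt_or_ge (d K) 1 with hdK | hdK
    · have hdK0 : d K = 0 := by omega
      have e1 : vF d (K + 1) = vF d K := by rw [vF, Finset.sum_range_succ, ← vF, hdK0]; ring_nf
      have e2 : vR τ d (K + 1) = vR τ d K := by
        rw [vR, Finset.sum_range_succ, ← vR, hdK0]; push_cast; ring
      rw [e1, e2, ih]
    · have hdK1 : d K = 1 := le_antisymm (hd.1 K) hdK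
      have e1 : vF d (K + 1) = vF d K + Nat.fib (K + 2) := by
        rw [vF, Finset.sum_range_succ, ← vF, hdK1]; ring_nf
      have e2 : vR τ d (K + 1) = vR τ d K + τ ^ K := by
        rw [vR, Finset.sum_range_succ, ← vR, hdK1]; push_cast; ring
      set m := vF d K with hm
      have hmlt : m < Nat.fib (K + 1) := by
        match K with
        | 0 =>
          have : m = 0 := by rw [hm]; simp [vF]
          rw [this]
          simp [Nat.fib]
        | (K + 1) =>
          have hd0 : d K = 0 := hd.2 K hdK1
          have e3 : m = vF d K := by rw [hm, vF, Finset.sum_range_succ, ← vF, hd0]; ring_nf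
          have := vF_lt hd K
          have e4 : Nat.fib (K + 1 + 1) = Nat.fib (K + 2) := rfl
          omega
      have hfu' : Nat.fib (K + 3) = Nat.fib (K + 1) + Nat.fib (K + 2) := Nat.fib_add_two
      have hfl : Nat.fib (K + 2) ≤ vF d (K + 1) := by omega
      have hfu : vF d (K + 1) < Nat.fib (K + 3) := by omega
      rw [B_rec τ hfl hfu]
      have e5 : vF d (K + 1) - Nat.fib (K + 2) = m := by omega
      rw [e5, ih, e2]
      ring

include h2 h1 in
lemma master (n : ℕ) :
    ∃ d : ℕ → ℕ, Good d ∧ (∀ i, n < Nat.fib (i + 2) → d i = 0) ∧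
      ∀ M, n ≤ M → vF d M = n ∧ vR τ d M = B τ n := by
  induction n using Nat.strong_induction_on with
  | _ n ih =>
    rcases Nat.eq_zero_or_pos n with rfl | hn0
    · refine ⟨fun _ => 0, ⟨fun _ => by norm_num, fun _ _ => rfl⟩, fun _ _ => rfl, fun M _ => ?_⟩
      constructor
      · simp [vF]
      · simp [vR]
    · obtain ⟨j, hjl, hju⟩ := exists_j hn0
      set m := n - Nat.fib (j + 2) with hm
      have hmfib : m < Nat.fib (j + 1) := sub_lt_fib hju
      have hfibpos : 0 < Nat.fib (j + 2) := Nat.fib_pos.2 (by omega)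
      have hmlt : m < n := by omega
      obtain ⟨dm, hdm, hsupp, hval⟩ := ih m hmlt
      have hsupp' : ∀ i, Nat.fib (j + 1) ≤ Nat.fib (i + 2) → dm i = 0 := by
        intro i hi
        exact hsupp i (by omega)
      refine ⟨fun i => if i = j then 1 else dm i, ⟨?_, ?_⟩, ?_, ?_⟩
      · intro i
        by_cases hij : i = j <;> simp [hij, hdm.1 i]
      · intro i hi
        replace hi : (if i + 1 = j then 1 else dm (i + 1)) = 1 := hi
        show (if i = j then 1 else dm i) = 0
        by_cases hij : i + 1 = j
        · rw [if_neg (show i ≠ j by omega)]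
          exact hsupp' i (by rw [show i + 2 = j + 1 by omega])
        · rw [if_neg hij] at hi
          by_cases hij2 : i = j
          · exfalso
            have : dm (i + 1) = 0 := hsupp' (i + 1) (Nat.fib_mono (by omega))
            omega
          · rw [if_neg hij2]
            exact hdm.2 i hi
      · intro i hi
        show (if i = j then 1 else dm i) = 0
        have hij : i ≠ j := by
          intro hij; rw [hij] at hi; omega
        rw [if_neg hij]
        exact hsupp i (by omega)
      · intro M hM
        have hjM : j ∈ Finset.range M := Finset.mem_range.2 (by
          have := lt_fib j
          omega)
        have hdmj : dm j = 0 := hsupp' j (Nat.fib_mono (by omega))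
        have hmM : m ≤ M := by omega
        have hrec : B τ n = τ ^ j + B τ m := B_rec τ hjl hju
        constructor
        · have congr1 : ∑ i ∈ (Finset.range M).erase j,
              (if i = j then 1 else dm i) * Nat.fib (i + 2)
              = ∑ i ∈ (Finset.range M).erase j, dm i * Nat.fib (i + 2) :=
            Finset.sum_congr rfl fun x hx => by rw [if_neg (Finset.ne_of_mem_erase hx)]
          have congr2 : ∑ i ∈ (Finset.range M).erase j, dm i * Nat.fib (i + 2) = vF dm M := by
            rw [vF, ← Finset.add_sum_erase _ (fun i => dm i * Nat.fib (i + 2)) hjM, hdmj]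
            simp
          rw [vF, ← Finset.add_sum_erase _ _ hjM, congr1, congr2, if_pos rfl, one_mul,
            (hval M hmM).1]
          omega
        · have congr1 : ∑ i ∈ (Finset.range M).erase j,
              ((if i = j then 1 else dm i : ℕ) : ℝ) * τ ^ i
              = ∑ i ∈ (Finset.range M).erase j, (dm i : ℝ) * τ ^ i :=
            Finset.sum_congr rfl fun x hx => by rw [if_neg (Finset.ne_of_mem_erase hx)]
          have congr2 : ∑ i ∈ (Finset.range M).erase j, (dm i : ℝ) * τ ^ i = vR τ dm M := by
            rw [vR, ← Finset.add_sum_erase _ (fun i => (dm i : ℝ) * τ ^ i) hjM, hdmj]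
            simp
          rw [vR, ← Finset.add_sum_erase _ _ hjM, congr1, congr2, if_pos rfl,
            (hval M hmM).2, hrec]
          push_cast
          ring

end valeq

/-! ### tsum bridges -/

lemma tsum_int_eq_sum {w : ℤ → ℝ} {K : ℕ} (hw : ∀ i : ℤ, (i < 0 ∨ (K : ℤ) ≤ i) → w i = 0) :
    ∑' i : ℤ, w i = ∑ a ∈ Finset.range K, w a := by
  rw [tsum_eq_sum (s := (Finset.range K).map ⟨((↑) : ℕ → ℤ), fun a b h => by exact_mod_cast h⟩) ?_]
  · rw [Finset.sum_map]
    rfl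
  · intro i hi
    apply hw
    simp only [Finset.mem_map, Finset.mem_range, Function.Embedding.coeFn_mk] at hi
    by_contra hc
    push_neg at hc
    exact hi ⟨i.toNat, by omega, Int.toNat_of_nonneg (by omega)⟩

lemma tsum_lt_eq {w : ℤ → ℝ} {K : ℕ} (hw : ∀ i : ℤ, (i < 0 ∨ (K : ℤ) ≤ i) → w i = 0) (i : ℤ) :
    ∑' j : {j : ℤ // j < i}, w j = ∑ a ∈ Finset.range K, if (a : ℤ) < i then w a else 0 := by
  have hind : ∑' j : {j : ℤ // j < i}, w ↑j = ∑' j : ℤ, Set.indicator {j : ℤ | j < i} w j :=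
    tsum_subtype {j : ℤ | j < i} w
  rw [hind, tsum_int_eq_sum (w := Set.indicator {j : ℤ | j < i} w) (K := K) ?_]
  · exact Finset.sum_congr rfl fun a _ => by
      simp [Set.indicator_apply, Set.mem_setOf_eq]
  · intro q hq
    rw [Set.indicator_apply]
    split
    · exact hw q hq
    · rfl

section range
variable {τ : ℝ} (h2 : τ ^ 2 = τ + 1) (h1 : 1 < τ)

include h2 h1 in
lemma mem_Zbeta_of_good {d : ℕ → ℕ} (hd : Good d) (K : ℕ) (hsup : ∀ i, K ≤ i → d i = 0) :
    vR τ d K ∈ ZbetaPlus τ := by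
  have hτ0 : (0:ℝ) < τ := tau_pos h1
  have hτne : τ ≠ 0 := hτ0.ne'
  set D : ℤ → ℕ := fun i => if 0 ≤ i then d i.toNat else 0 with hD
  set w : ℤ → ℝ := fun i => (D i : ℝ) * τ ^ i with hwdef
  have hw : ∀ i : ℤ, (i < 0 ∨ (K : ℤ) ≤ i) → w i = 0 := by
    intro i hi
    rcases hi with hi | hi
    · simp only [hwdef, hD, if_neg (by omega : ¬ (0:ℤ) ≤ i)]
      norm_num
    · have : d i.toNat = 0 := hsup i.toNat (by omega)
      simp only [hwdef, hD, if_pos (by omega : (0:ℤ) ≤ i), this]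
      norm_num
  have hwa : ∀ a : ℕ, w a = (d a : ℝ) * τ ^ a := by
    intro a
    simp only [hwdef, hD, if_pos (Int.natCast_nonneg a), Int.toNat_natCast]
    rw [zpow_natCast]
  refine ⟨?_, D, ⟨⟨(K : ℤ), fun i hi => ?_⟩, ?_, ?_⟩, fun i hi => ?_⟩
  · exact Finset.sum_nonneg fun a _ => mul_nonneg (Nat.cast_nonneg _) (pow_nonneg hτ0.le _)
  · simp only [hD, if_pos (by omega : (0:ℤ) ≤ i)]
    exact hsup i.toNat (by omega)
  · rw [tsum_int_eq_sum hw, vR]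
    exact (Finset.sum_congr rfl fun a _ => (hwa a)).symm
  · intro i
    rw [tsum_lt_eq hw i]
    rcases le_or_gt i 0 with hi | hi
    · have hz : ∀ a ∈ Finset.range K, (if (a : ℤ) < i then w a else 0) = 0 := by
        intro a _
        rw [if_neg (by omega)]
      rw [Finset.sum_eq_zero hz]
      exact zpow_pos hτ0 i
    · set t := i.toNat with ht
      have hti : (t : ℤ) = i := Int.toNat_of_nonneg hi.le
      have hsum : ∑ a ∈ Finset.range K, (if (a : ℤ) < i then w a else 0)
          = vR τ d (min K t) := by
        rw [vR, ← Finset.sum_subset (Finset.range_subset_range.2 (min_le_left K t))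
          (fun x _ hx => ?_)]
        · exact Finset.sum_congr rfl fun a ha => by
            rw [if_pos (by
              have := Finset.mem_range.1 ha
              omega), hwa a]
        · simp only [Finset.mem_range] at hx
          rcases lt_or_ge x t with hxt | hxt
          · rw [if_pos (by omega), hwa x]
            have : d x = 0 := hsup x (by omega)
            rw [this]
            norm_num
          · rw [if_neg (by omega)]
      rw [hsum]
      calc vR τ d (min K t) < τ ^ (min K t) := vR_lt h2 h1 hd _
        _ ≤ τ ^ t := pow_le_pow_right₀ h1.le (min_le_right K t)
        _ = τ ^ i := by rw [← hti, zpow_natCast]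
  · simp only [hD, if_neg (by omega : ¬ (0:ℤ) ≤ i)]

include h2 h1 in
lemma tau_lt_two : τ < 2 := by nlinarith

include h2 h1 in
lemma range_B_eq : Set.range (B τ) = ZbetaPlus τ := by
  have hτ0 : (0:ℝ) < τ := tau_pos h1
  have hτne : τ ≠ 0 := hτ0.ne'
  apply Set.Subset.antisymm
  · rintro x ⟨n, rfl⟩
    obtain ⟨d, hd, hsupp, hval⟩ := master h2 h1 n
    have hvv : vR τ d n = B τ n := (hval n le_rfl).2
    have hsup : ∀ i, n ≤ i → d i = 0 := fun i hi => hsupp i (lt_of_le_of_lt hi (lt_fib i))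
    rw [← hvv]
    exact mem_Zbeta_of_good h2 h1 hd n hsup
  · rintro x ⟨hx0, d, ⟨⟨K, hK⟩, hsum, htail⟩, hneg⟩
    set N : ℕ := K.toNat + 1 with hN
    set w : ℤ → ℝ := fun i => (d i : ℝ) * τ ^ i with hwdef
    have hw : ∀ i : ℤ, (i < 0 ∨ (N : ℤ) ≤ i) → w i = 0 := by
      intro i hi
      have hKt : K ≤ (K.toNat : ℤ) := Int.self_le_toNat K
      rcases hi with hi | hi
      · simp only [hwdef, hneg i hi]; norm_num
      · have : d i = 0 := hK i (by push_cast at hi ⊢; omega)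
        simp only [hwdef, this]; norm_num
    have hwa : ∀ a : ℕ, w a = (d a : ℝ) * τ ^ a := fun a => by
      simp only [hwdef]; rw [zpow_natCast]
    set d' : ℕ → ℕ := fun a => d a with hd'def
    -- every digit is at most 1
    have hdig : ∀ a : ℕ, d' a ≤ 1 := by
      intro a
      rcases Nat.lt_or_ge a N with haN | haN
      · have ht := htail ((a : ℤ) + 1)
        rw [tsum_lt_eq hw ((a : ℤ) + 1)] at ht
        have hmem : a ∈ Finset.range N := Finset.mem_range.2 haN
        have hnonneg : ∀ b ∈ Finset.range N,
            0 ≤ (if (b : ℤ) < (a : ℤ) + 1 then w b else 0) := by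
          intro b _
          split
          · exact mul_nonneg (Nat.cast_nonneg _) (zpow_nonneg hτ0.le _)
          · exact le_refl 0
        have hsingle := Finset.single_le_sum hnonneg hmem
        rw [if_pos (by omega), hwa a] at hsingle
        have hz : (0:ℝ) < τ ^ a := pow_pos hτ0 a
        have hzz : τ ^ ((a : ℤ) + 1) = τ ^ a * τ := by
          rw [zpow_add_one₀ hτne, zpow_natCast]
        have hlt : (d' a : ℝ) * τ ^ a < τ ^ a * τ :=
          calc (d' a : ℝ) * τ ^ a ≤ _ := hsingle
            _ < τ ^ ((a:ℤ) + 1) := ht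
            _ = τ ^ a * τ := hzz
        have hda : (d' a : ℝ) < τ := by
          by_contra hcon
          push_neg at hcon
          nlinarith
        have : (d' a : ℝ) < 2 := lt_trans hda (tau_lt_two h2 h1)
        exact_mod_cast Nat.lt_succ_iff.1 (by exact_mod_cast this)
      · have : d' a = 0 := by
          have := hK a (by push_cast; have hKt : K ≤ (K.toNat : ℤ) := Int.self_le_toNat K; omega)
          exact this
        omega
    -- no two consecutive ones
    have hcons : ∀ a : ℕ, d' (a + 1) = 1 → d' a = 0 := by
      intro a hA
      by_contra hcon
      have hda : 1 ≤ d' a := by omega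
      have haN : a + 1 < N := by
        by_contra hge
        have : d' (a + 1) = 0 := by
          have := hK ((a:ℤ) + 1) (by
            have hKt : K ≤ (K.toNat : ℤ) := Int.self_le_toNat K
            omega)
          simpa [hd'def] using (by push_cast at this ⊢; exact this : d ((a:ℤ)+1) = 0)
        omega
      have ht := htail ((a : ℤ) + 2)
      rw [tsum_lt_eq hw ((a : ℤ) + 2)] at ht
      have hsub : ({a, a + 1} : Finset ℕ) ⊆ Finset.range N := by
        intro x hx
        simp only [Finset.mem_insert, Finset.mem_singleton] at hx
        rcases hx with rfl | rfl <;> exact Finset.mem_range.2 (by omega)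
      have hnonneg : ∀ b ∈ Finset.range N, b ∉ ({a, a + 1} : Finset ℕ) →
          0 ≤ (if (b : ℤ) < (a : ℤ) + 2 then w b else 0) := by
        intro b _ _
        split
        · exact mul_nonneg (Nat.cast_nonneg _) (zpow_nonneg hτ0.le _)
        · exact le_refl 0
      have hpair := Finset.sum_le_sum_of_subset_of_nonneg hsub hnonneg
      rw [Finset.sum_pair (by omega : a ≠ a + 1)] at hpair
      rw [if_pos (by omega), if_pos (by push_cast; omega)] at hpair
      have hlt := lt_of_le_of_lt hpair ht
      -- now derive contradiction
      have hP : (0:ℝ) < τ ^ (a : ℤ) := zpow_pos hτ0 _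
      have e1 : w a = (d' a : ℝ) * τ ^ (a : ℤ) := rfl
      have e2 : w (↑(a + 1)) = (d' (a+1) : ℝ) * (τ ^ (a : ℤ) * τ) := by
        simp only [hwdef, hd'def]
        push_cast
        rw [zpow_add_one₀ hτne]
      have e3 : τ ^ ((a : ℤ) + 2) = τ ^ (a : ℤ) * τ ^ 2 := by
        rw [show ((a:ℤ) + 2) = ((a + 2 : ℕ) : ℤ) by push_cast; ring, zpow_natCast, zpow_natCast,
          pow_add]
      rw [e1, e2, e3, hA] at hlt
      have hda' : (1:ℝ) ≤ (d' a : ℝ) := by exact_mod_cast hda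
      have hPt : τ ^ (a:ℤ) * τ ^ 2 = τ ^ (a:ℤ) * τ + τ ^ (a:ℤ) := by rw [h2]; ring
      have hge : τ ^ (a:ℤ) ≤ (d' a : ℝ) * τ ^ (a:ℤ) := le_mul_of_one_le_left hP.le hda'
      push_cast at hlt
      linarith
    have hgood : Good d' := ⟨hdig, hcons⟩
    have hx : x = vR τ d' N := by
      rw [hsum, tsum_int_eq_sum hw, vR]
      exact Finset.sum_congr rfl fun a _ => hwa a
    exact ⟨vF d' N, by rw [B_vF hgood N, ← hx]⟩

end range

end GoldenBd

/-- for the golden mean τ = (1+√5)/2, the n-th nonnegative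
τ-integer satisfies `|b_n − c_τ n| ≤ 1/τ³`, where `c_τ = (τ² + 1)/τ³`. -/
theorem golden_mean_beta_integer_bound (τ : ℝ) (hτ : τ = (1 + Real.sqrt 5) / 2)
    (b : ℕ → ℝ) (hmono : StrictMono b) (hb0 : b 0 = 0)
    (hrange : Set.range b = ZbetaPlus τ) :
    ∀ n : ℕ, |b n - (τ ^ 2 + 1) / τ ^ 3 * n| ≤ 1 / τ ^ 3 := by
  have h5 : Real.sqrt 5 ^ 2 = 5 := Real.sq_sqrt (by norm_num)
  have hs : 1 < Real.sqrt 5 := by nlinarith [Real.sqrt_nonneg 5]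
  have h2 : τ ^ 2 = τ + 1 := by rw [hτ]; linear_combination h5 / 4
  have h1 : 1 < τ := by rw [hτ]; linarith
  have hBe : b = GoldenBd.B τ :=
    (hmono.range_inj (GoldenBd.B_strictMono h2 h1)).1
      (hrange.trans (GoldenBd.range_B_eq h2 h1).symm)
  intro n
  rw [hBe]
  have hb := GoldenBd.B_bound h2 h1 n n (GoldenBd.lt_fib n)
  have i1 : 0 < 1 / τ ^ (n + 4) := GoldenBd.inv_pos' h1 _
  have i2 : 1 / τ ^ 4 ≤ 1 / τ ^ 3 := GoldenBd.inv_mono h1 (by omega)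
  rw [abs_le]
  constructor
  · linarith [hb.1]
  · linarith [hb.2]
end
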